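/- arXiv:1512.02868 — 6 statements merged into one kernel-verified Lean document; each statement's English description precedes it below -/
import Mathlib

section
/- Assume k : (0,∞) → [0,∞) satisfies condition (k) and let Ω ⊂ ℝ^N be an open set. Then for every u ∈ D^J(Ω) one has J(u,u) ≥ ∫_Ω u(x)² κ_Ω(x) dx, and consequently Λ₁(Ω) ≥ inf_{x∈Ω} κ_Ω(x). -/
open MeasureTheory Metric Set Filter
open scoped ENNReal RealInnerProductSpace

noncomputable section

abbrev Euc (N : ℕ) := EuclideanSpace ℝ (Fin N)

variable {N : ℕ}

/-- Condition (k) on the kernel `k`. -/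
def KCond (N : ℕ) (k : ℝ → ℝ) : Prop :=
  (∀ r : ℝ, 0 < r → 0 ≤ k r) ∧ AntitoneOn k (Set.Ioi 0) ∧
  (∃ r₀ > 0, StrictAntiOn k (Set.Ioo 0 r₀)) ∧
  IntegrableOn (fun r : ℝ => min 1 (r ^ 2) * k r * r ^ (N - 1)) (Set.Ioi 0) ∧
  ¬ IntegrableOn (fun r : ℝ => k r * r ^ (N - 1)) (Set.Ioi 0)

/-- `ρ(v,U')`. -/
def rhoE (k : ℝ → ℝ) (U : Set (Euc N)) (v : Euc N → ℝ) : ℝ≥0∞ :=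
  ∫⁻ x in U, ∫⁻ y in U, ENNReal.ofReal ((v x - v y) ^ 2 * k (dist x y))

/-- `J(v,v)` as an extended-real energy. -/
def jEnergy (k : ℝ → ℝ) (v : Euc N → ℝ) : ℝ≥0∞ :=
  (1 / 2) * ∫⁻ x, ∫⁻ y, ENNReal.ofReal ((v x - v y) ^ 2 * k (dist x y))

/-- The bilinear form `J(v,w)`. -/
def jForm (k : ℝ → ℝ) (v w : Euc N → ℝ) : ℝ :=
  (1 / 2) * ∫ x, ∫ y, (v x - v y) * (w x - w y) * k (dist x y)

/-- The space `D^J(Ω)`. -/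
def memDJ (k : ℝ → ℝ) (Ω : Set (Euc N)) (u : Euc N → ℝ) : Prop :=
  MemLp u 2 (volume : Measure (Euc N)) ∧ jEnergy k u < ⊤ ∧
    ∀ᵐ x : Euc N, x ∉ Ω → u x = 0

/-- The space `V^J(U')`. -/
def memVJ (k : ℝ → ℝ) (U' : Set (Euc N)) (v : Euc N → ℝ) : Prop :=
  (∃ v₁ v₂ : Euc N → ℝ, v = v₁ + v₂ ∧ MemLp v₁ 2 (volume : Measure (Euc N)) ∧
      MemLp v₂ ⊤ (volume : Measure (Euc N))) ∧ rhoE k U' v < ⊤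

/-- `κ_Ω(x) = ∫_{ℝ^N∖Ω} k(|x−y|) dy`. -/
def kappaSet (k : ℝ → ℝ) (Ω : Set (Euc N)) (x : Euc N) : ℝ≥0∞ :=
  ∫⁻ y in Ωᶜ, ENNReal.ofReal (k (dist x y))

/-- `Λ₁(Ω)`. -/
def lambda1 (k : ℝ → ℝ) (Ω : Set (Euc N)) : ℝ≥0∞ :=
  ⨅ (u : Euc N → ℝ) (_ : memDJ k Ω u) (_ : ¬ (∀ᵐ x : Euc N, u x = 0)),
    jEnergy k u / ∫⁻ x in Ω, ENNReal.ofReal ((u x) ^ 2)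

/-- The open affine half space `{x : ⟪x,e⟫ > l}`. -/
def halfSp (e : Euc N) (l : ℝ) : Set (Euc N) := {x | l < ⟪x, e⟫}

/-- Reflection across the hyperplane `{x : ⟪x,e⟫ = l}` (for a unit vector `e`). -/
def reflSp (e : Euc N) (l : ℝ) (x : Euc N) : Euc N := x + (2 * (l - ⟪x, e⟫)) • e

/-- Antisymmetric supersolution of `Iv = c(x) v` in `U`, `v ≡ 0` on `H∖U`. -/
def AntiSuperSol (k : ℝ → ℝ) (e : Euc N) (l : ℝ) (U : Set (Euc N))
    (c : Euc N → ℝ) (v : Euc N → ℝ) : Prop :=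
  (∀ x, v (reflSp e l x) = - v x) ∧
  (∃ U' : Set (Euc N), IsOpen U' ∧ reflSp e l '' U' = U' ∧ closure U ⊆ U' ∧ memVJ k U' v) ∧
  (∀ᵐ x : Euc N, x ∈ halfSp e l \ U → 0 ≤ v x) ∧
  (∀ ε > 0, ∃ R : ℝ, ∀ x ∈ halfSp e l, R ≤ ‖x‖ → -ε ≤ v x) ∧
  (∀ φ : Euc N → ℝ, memDJ k U φ → HasCompactSupport φ → (∀ x, 0 ≤ φ x) →
    ∫ x in U, c x * v x * φ x ≤ jForm k v φ)

/-- A set is radial if membership only depends on the norm. -/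
def IsRadialSet (Ω : Set (Euc N)) : Prop :=
  ∀ x y : Euc N, ‖x‖ = ‖y‖ → (x ∈ Ω ↔ y ∈ Ω)

/-- `u` is foliated Schwarz symmetric on `Ω` (w.r.t. some unit vector `p`). -/
def FoliatedSchwarz (Ω : Set (Euc N)) (u : Euc N → ℝ) : Prop :=
  ∃ p : Euc N, ‖p‖ = 1 ∧ ∀ r : ℝ, 0 < r → sphere (0 : Euc N) r ⊆ Ω → ∀ c : ℝ,
    {x ∈ sphere (0 : Euc N) r | c ≤ u x} = sphere (0 : Euc N) r ∨
    ∃ t : ℝ, {x ∈ sphere (0 : Euc N) r | c ≤ u x}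
      = {x ∈ sphere (0 : Euc N) r | dist x (r • p) ≤ t}

/-- Condition (U1). -/
def CondU1 (u : Euc N → ℝ) : Prop :=
  ∃ e : Euc N, ‖e‖ = 1 ∧ (∀ x ∈ halfSp e 0, u (reflSp e 0 x) ≤ u x) ∧
    ∃ x ∈ halfSp e 0, u (reflSp e 0 x) ≠ u x

/-- Condition (F1). -/
def CondF1 (f : ℝ → ℝ → ℝ) : Prop :=
  ∀ K > 0, ∃ L > 0, ∀ r : ℝ, 0 ≤ r → ∀ a ∈ Set.Icc (-K) K, ∀ b ∈ Set.Icc (-K) K,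
    |f r a - f r b| ≤ L * |a - b|

/-- Condition (F2). -/
def CondF2 (f : ℝ → ℝ → ℝ) : Prop :=
  (∀ r : ℝ, 0 ≤ r → f r 0 = 0) ∧
  ∃ δ > 0, ∀ r : ℝ, 0 ≤ r → ∀ a : ℝ, a ≠ 0 → |a| ≤ δ → f r a / a ≤ 0

/-- Weak solution of `Iu = f(|x|,u)` in `Ω`, `u ≡ 0` on `ℝ^N∖Ω`. -/
def IsWeakSol (k : ℝ → ℝ) (Ω : Set (Euc N)) (f : ℝ → ℝ → ℝ) (u : Euc N → ℝ) : Prop :=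
  memDJ k Ω u ∧ ∀ φ : Euc N → ℝ, memDJ k Ω φ → HasCompactSupport φ →
    IntegrableOn (fun x => f ‖x‖ (u x) * φ x) Ω ∧
    jForm k u φ = ∫ x in Ω, f ‖x‖ (u x) * φ x

/-- `u` is a bounded function. -/
def IsBoundedFun (u : Euc N → ℝ) : Prop := ∃ M : ℝ, ∀ x, |u x| ≤ M

/-- Extension of the kernel to a globally antitone `ℝ≥0∞`-valued function. -/
def Kext (k : ℝ → ℝ) : ℝ → ℝ≥0∞ := fun r => if 0 < r then ENNReal.ofReal (k r) else ⊤

lemma Kext_antitone {k : ℝ → ℝ} (hk : AntitoneOn k (Set.Ioi 0)) : Antitone (Kext k) := by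
  intro a b hab
  unfold Kext
  by_cases ha : 0 < a
  · have hb : 0 < b := lt_of_lt_of_le ha hab
    simp only [if_pos ha, if_pos hb]
    exact ENNReal.ofReal_le_ofReal (hk ha hb hab)
  · simp [if_neg ha]

lemma Kext_measurable {k : ℝ → ℝ} (hk : AntitoneOn k (Set.Ioi 0)) : Measurable (Kext k) :=
  (Kext_antitone hk).measurable

/-- The pointwise identity relating the original integrand to the sanitized one. -/
lemma ofReal_eq_Kext {k : ℝ → ℝ} (hk : AntitoneOn k (Set.Ioi 0)) (u' : Euc N → ℝ)
    (x y : Euc N) :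
    ENNReal.ofReal ((u' x - u' y) ^ 2 * k (dist x y))
      = ENNReal.ofReal ((u' x - u' y) ^ 2) * Kext k (dist x y) := by
  by_cases hxy : x = y
  · subst hxy; simp
  · have hd : 0 < dist x y := dist_pos.2 hxy
    rw [ENNReal.ofReal_mul (sq_nonneg _)]
    simp [Kext, if_pos hd, hxy]

theorem jEnergy_ge_and_lambda1_ge (N : ℕ) (k : ℝ → ℝ) (hk : KCond N k)
    (Ω : Set (Euc N)) (hΩo : IsOpen Ω) :
    (∀ u : Euc N → ℝ, memDJ k Ω u →
      ∫⁻ x in Ω, ENNReal.ofReal ((u x) ^ 2) * kappaSet k Ω x ≤ jEnergy k u) ∧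
    (⨅ x ∈ Ω, kappaSet k Ω x) ≤ lambda1 k Ω := by
  classical
  have hΩm : MeasurableSet Ω := hΩo.measurableSet
  have part1 : ∀ u : Euc N → ℝ, memDJ k Ω u →
      ∫⁻ x in Ω, ENNReal.ofReal ((u x) ^ 2) * kappaSet k Ω x ≤ jEnergy k u := by
    intro u hu
    obtain ⟨hu2, hJfin, hu0⟩ := hu
    -- measurable representative vanishing outside Ω
    set v : Euc N → ℝ := hu2.aestronglyMeasurable.mk u with hv
    have hvmeas : Measurable v := hu2.aestronglyMeasurable.stronglyMeasurable_mk.measurable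
    set u' : Euc N → ℝ := Ω.indicator v with hu'def
    have hu'meas : Measurable u' := hvmeas.indicator hΩm
    have hu'zero : ∀ x ∉ Ω, u' x = 0 := fun x hx => Set.indicator_of_notMem hx v
    have hu'eq : u =ᵐ[volume] u' := by
      filter_upwards [hu2.aestronglyMeasurable.ae_eq_mk, hu0] with x hx hx0
      by_cases hxΩ : x ∈ Ω
      · simpa [hu'def, Set.indicator_of_mem hxΩ, hv] using hx
      · rw [hu'def]; simp [Set.indicator_of_notMem hxΩ, hx0 hxΩ]
    set G : Euc N × Euc N → ℝ≥0∞ :=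
      fun p => ENNReal.ofReal ((u' p.1 - u' p.2) ^ 2) * Kext k (dist p.1 p.2) with hGdef
    have hGmeas : Measurable G := by
      apply Measurable.mul
      · exact ((hu'meas.comp measurable_fst).sub (hu'meas.comp measurable_snd)).pow_const 2
        |>.ennreal_ofReal
      · exact (Kext_measurable hk.2.1).comp continuous_dist.measurable
    have hGsymm : ∀ x y : Euc N, G (x, y) = G (y, x) := by
      intro x y
      simp only [hGdef, dist_comm]
      ring_nf
    -- rewrite jEnergy in terms of G
    have hJ : jEnergy k u = (1 / 2) * ∫⁻ x, ∫⁻ y, G (x, y) := by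
      unfold jEnergy
      congr 1
      refine lintegral_congr_ae ?_
      filter_upwards [hu'eq] with x hx
      refine lintegral_congr_ae ?_
      filter_upwards [hu'eq] with y hy
      rw [hx, hy, ofReal_eq_Kext hk.2.1]
    -- rewrite the LHS
    have hA : ∫⁻ x in Ω, ENNReal.ofReal ((u x) ^ 2) * kappaSet k Ω x
        = ∫⁻ x in Ω, ∫⁻ y in Ωᶜ, G (x, y) := by
      refine lintegral_congr_ae ?_
      filter_upwards [ae_restrict_of_ae hu'eq, ae_restrict_mem hΩm] with x hx hxΩ
      rw [hx]
      have hκ : kappaSet k Ω x = ∫⁻ y in Ωᶜ, Kext k (dist x y) := by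
        unfold kappaSet
        refine setLIntegral_congr_fun hΩm.compl (fun y hy => ?_)
        have hxy : x ≠ y := fun h => hy (h ▸ hxΩ)
        simp [Kext, dist_pos.2 hxy, hxy]
      rw [hκ, ← lintegral_const_mul' _ _ ENNReal.ofReal_ne_top]
      refine setLIntegral_congr_fun hΩm.compl (fun y hy => ?_)
      simp [hGdef, hu'zero y hy]
    set A : ℝ≥0∞ := ∫⁻ x in Ω, ∫⁻ y in Ωᶜ, G (x, y) with hAdef
    -- key inequality: 2 * A ≤ full double integral
    have hswap : A = ∫⁻ x in Ωᶜ, ∫⁻ y in Ω, G (x, y) := by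
      rw [hAdef, lintegral_lintegral_swap (hGmeas.aemeasurable)]
      exact lintegral_congr fun x => lintegral_congr fun y => hGsymm y x
    have hkey : A + A ≤ ∫⁻ x, ∫⁻ y, G (x, y) := by
      rw [← lintegral_add_compl (fun x => ∫⁻ y, G (x, y)) hΩm]
      refine add_le_add ?_ ?_
      · exact lintegral_mono fun x => setLIntegral_le_lintegral _ _
      · rw [hswap]
        exact lintegral_mono fun x => setLIntegral_le_lintegral _ _
    rw [hA, hJ]
    calc A = (1 / 2) * (A + A) := by
            rw [← two_mul, ← mul_assoc, one_div,
              ENNReal.inv_mul_cancel two_ne_zero ENNReal.ofNat_ne_top, one_mul]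
      _ ≤ (1 / 2) * ∫⁻ x, ∫⁻ y, G (x, y) := by gcongr
  refine ⟨part1, ?_⟩
  -- second part
  refine le_iInf fun u => le_iInf fun hu => le_iInf fun hne => ?_
  set m : ℝ≥0∞ := ⨅ x ∈ Ω, kappaSet k Ω x with hm
  set D : ℝ≥0∞ := ∫⁻ x in Ω, ENNReal.ofReal ((u x) ^ 2) with hD
  have huae : AEMeasurable (fun x => ENNReal.ofReal ((u x) ^ 2)) (volume.restrict Ω) :=
    (ENNReal.measurable_ofReal.comp_aemeasurable
      ((hu.1.aestronglyMeasurable.aemeasurable.pow_const 2))).restrict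
  have hD0 : D ≠ 0 := by
    intro h0
    apply hne
    have := (lintegral_eq_zero_iff' huae).1 h0
    have h1 : ∀ᵐ x ∂(volume.restrict Ω), u x = 0 := by
      filter_upwards [this] with x hx
      have : (u x) ^ 2 ≤ 0 := ENNReal.ofReal_eq_zero.1 hx
      have h2 : (u x) ^ 2 = 0 := le_antisymm this (sq_nonneg _)
      exact (pow_eq_zero_iff two_ne_zero).1 h2
    have h1' := (ae_restrict_iff' hΩm).1 h1
    filter_upwards [h1', hu.2.2] with x hx hx0
    by_cases hxΩ : x ∈ Ω
    · exact hx hxΩ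
    · exact hx0 hxΩ
  have hchain : m * D ≤ jEnergy k u := by
    have h1 : m * D = ∫⁻ x in Ω, m * ENNReal.ofReal ((u x) ^ 2) :=
      (lintegral_const_mul'' m huae).symm
    have h2 : (∫⁻ x in Ω, m * ENNReal.ofReal ((u x) ^ 2))
        ≤ ∫⁻ x in Ω, ENNReal.ofReal ((u x) ^ 2) * kappaSet k Ω x := by
      refine lintegral_mono_ae ?_
      filter_upwards [ae_restrict_mem hΩm] with x hxΩ
      rw [mul_comm]
      exact mul_le_mul_right (iInf₂_le x hxΩ) _
    exact h1 ▸ h2.trans (part1 u hu)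
  refine (ENNReal.le_div_iff_mul_le (Or.inl hD0) (Or.inr hu.2.1.ne)).2 hchain
end
end

section
/- Assume k : (0,∞) → [0,∞) satisfies condition (k). Then lim_{r→0} inf_{Ω ⊂ ℝ^N open, |Ω| = r} inf_{x∈Ω} κ_Ω(x) = ∞; that is, for every M > 0 there is r* > 0 such that for every r ∈ (0,r*), every open set Ω ⊂ ℝ^N with Lebesgue measure |Ω| = r, and every x ∈ Ω, one has κ_Ω(x) ≥ M. -/
open MeasureTheory Metric Set Filter
open scoped ENNReal RealInnerProductSpace

noncomputable section

variable {N : ℕ}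

section AuxPolar

open MeasureTheory Measure in
private lemma lintegral_fun_norm_polar {E : Type*} [NormedAddCommGroup E] [NormedSpace ℝ E]
    [MeasurableSpace E] [BorelSpace E] [Nontrivial E] [FiniteDimensional ℝ E]
    (μ : Measure E) [μ.IsAddHaarMeasure] (g : ℝ → ℝ≥0∞) (hg : Measurable g) :
    ∫⁻ x, g ‖x‖ ∂μ = μ.toSphere Set.univ *
      ∫⁻ r in Set.Ioi (0:ℝ), g r * ENNReal.ofReal (r ^ (Module.finrank ℝ E - 1)) := by
  have h0 : ∫⁻ x, g ‖x‖ ∂μ = ∫⁻ x : ({(0:E)}ᶜ : Set E), g ‖(x : E)‖ ∂(μ.comap (↑)) := by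
    rw [lintegral_subtype_comap (measurableSet_singleton (0:E)).compl fun x : E => g ‖x‖,
      MeasureTheory.restrict_compl_singleton]
  have hmeas : Measurable fun p : sphere (0:E) 1 × Set.Ioi (0:ℝ) => g p.2 :=
    hg.comp (measurable_subtype_coe.comp measurable_snd)
  have h1 : ∫⁻ x : ({(0:E)}ᶜ : Set E), g ‖(x : E)‖ ∂(μ.comap (↑))
      = ∫⁻ p : sphere (0:E) 1 × Set.Ioi (0:ℝ), g p.2
          ∂(μ.toSphere.prod (volumeIoiPow (Module.finrank ℝ E - 1))) := by
    rw [← (measurePreserving_homeomorphUnitSphereProd μ).lintegral_comp hmeas]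
    exact lintegral_congr fun x => by simp
  have h2 : ∫⁻ p : sphere (0:E) 1 × Set.Ioi (0:ℝ), g p.2
        ∂(μ.toSphere.prod (volumeIoiPow (Module.finrank ℝ E - 1)))
      = μ.toSphere Set.univ *
          ∫⁻ r : Set.Ioi (0:ℝ), g r ∂(volumeIoiPow (Module.finrank ℝ E - 1)) := by
    rw [lintegral_prod _ hmeas.aemeasurable]
    simp [lintegral_const, mul_comm]
  have h3 : ∫⁻ r : Set.Ioi (0:ℝ), g r ∂(volumeIoiPow (Module.finrank ℝ E - 1))
      = ∫⁻ r in Set.Ioi (0:ℝ), g r * ENNReal.ofReal (r ^ (Module.finrank ℝ E - 1)) := by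
    rw [Measure.volumeIoiPow,
      lintegral_withDensity_eq_lintegral_mul _
        ((measurable_subtype_coe.pow_const _).ennreal_ofReal)
        (show Measurable fun r : Set.Ioi (0:ℝ) => g r from hg.comp measurable_subtype_coe)]
    have h4 := lintegral_subtype_comap (μ := (volume : Measure ℝ)) (measurableSet_Ioi (a := (0:ℝ)))
      (fun r : ℝ => ENNReal.ofReal (r ^ (Module.finrank ℝ E - 1)) * g r)
    calc ∫⁻ r : Set.Ioi (0:ℝ),
          ((fun r : Set.Ioi (0:ℝ) => ENNReal.ofReal ((r:ℝ) ^ (Module.finrank ℝ E - 1))) *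
            fun r : Set.Ioi (0:ℝ) => g r) r ∂(Measure.comap Subtype.val volume)
        = ∫⁻ r in Set.Ioi (0:ℝ), ENNReal.ofReal (r ^ (Module.finrank ℝ E - 1)) * g r := h4
      _ = ∫⁻ r in Set.Ioi (0:ℝ), g r * ENNReal.ofReal (r ^ (Module.finrank ℝ E - 1)) :=
          lintegral_congr fun r => mul_comm _ _
  rw [h0, h1, h2, h3]

end AuxPolar

theorem kappa_blows_up_for_small_sets (N : ℕ) (k : ℝ → ℝ) (hk : KCond N k) :
    ∀ M : ℝ, 0 < M → ∃ rstar > 0, ∀ r : ℝ, 0 < r → r < rstar →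
      ∀ Ω : Set (Euc N), IsOpen Ω → volume Ω = ENNReal.ofReal r →
        ∀ x ∈ Ω, ENNReal.ofReal M ≤ kappaSet k Ω x := by
  obtain ⟨hk0, hkanti, -, hkint, hknint⟩ := hk
  intro M hM
  by_cases hN : N = 0
  · -- dimension 0 : vacuous, since the only nonempty open set has measure 1
    refine ⟨1, one_pos, fun r hr hr1 Ω hΩo hΩv x hx => ?_⟩
    exfalso
    subst hN
    have hU : Ω = Set.univ := Set.eq_univ_of_forall fun y => by
      have : y = x := PiLp.ext fun i => Fin.elim0 i
      rwa [this]
    have h1 : volume (Set.univ : Set (Euc 0)) = 1 := by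
      have h := (EuclideanSpace.volume_preserving_symm_measurableEquiv_toLp (Fin 0)).measure_preimage
        ((MeasurableSet.univ (α := Fin 0 → ℝ)).nullMeasurableSet)
      have h2 : volume (Set.univ : Set (Fin 0 → ℝ)) = 1 := by
        rw [MeasureTheory.volume_pi, MeasureTheory.Measure.pi_univ]
        simp
      simpa [h2] using h
    rw [hU, h1] at hΩv
    have : ENNReal.ofReal r < 1 := ENNReal.ofReal_lt_one.mpr hr1
    rw [← hΩv] at this
    exact lt_irrefl _ this
  · have hNpos : 0 < N := Nat.pos_of_ne_zero hN
    haveI : Nonempty (Fin N) := ⟨⟨0, hNpos⟩⟩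
    haveI : Nontrivial (Euc N) := inferInstance
    -- the truncated kernels
    set e : ℕ → ℝ := fun n => 1 / ((n : ℝ) + 1) with he
    have hepos : ∀ n, 0 < e n := fun n => by positivity
    set g : ℕ → ℝ → ℝ≥0∞ := fun n r =>
      (Set.Ioo (e n) 1).indicator (fun t => ENNReal.ofReal (k (max t (e n)))) r with hgdef
    have hKanti : ∀ c : ℝ, 0 < c → Antitone fun r : ℝ => k (max r c) := by
      intro c hc a b hab
      exact hkanti (Set.mem_Ioi.2 (hc.trans_le (le_max_right a c)))
        (Set.mem_Ioi.2 (hc.trans_le (le_max_right b c))) (max_le_max hab le_rfl)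
    have gmeas : ∀ n, Measurable (g n) := fun n =>
      (((hKanti (e n) (hepos n)).measurable).ennreal_ofReal).indicator measurableSet_Ioo
    have he_anti : ∀ {m n : ℕ}, m ≤ n → e n ≤ e m := by
      intro m n hmn
      apply one_div_le_one_div_of_le (by positivity)
      have : (m : ℝ) ≤ n := Nat.cast_le.2 hmn
      linarith
    have gmono : ∀ {m n : ℕ}, m ≤ n → ∀ r, g m r ≤ g n r := by
      intro m n hmn r
      by_cases hrm : r ∈ Set.Ioo (e m) 1
      · have hrn : r ∈ Set.Ioo (e n) 1 := ⟨lt_of_le_of_lt (he_anti hmn) hrm.1, hrm.2⟩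
        rw [hgdef]
        simp only [Set.indicator_of_mem hrm, Set.indicator_of_mem hrn,
          max_eq_left hrm.1.le, max_eq_left hrn.1.le]
        exact le_rfl
      · rw [hgdef]
        simp only [Set.indicator_of_notMem hrm]
        exact zero_le
    have gle : ∀ n r, g n r ≤ ENNReal.ofReal (k (e n)) := by
      intro n r
      rw [hgdef]
      by_cases hr : r ∈ Set.Ioo (e n) 1
      · simp only [Set.indicator_of_mem hr]
        exact ENNReal.ofReal_le_ofReal
          (hkanti (Set.mem_Ioi.2 (hepos n)) (Set.mem_Ioi.2 ((hepos n).trans_le (le_max_right r _)))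
            (le_max_right r _))
      · simp only [Set.indicator_of_notMem hr]; exact zero_le
    have gler : ∀ n r, 0 < r → g n r ≤ ENNReal.ofReal (k r) := by
      intro n r hr
      rw [hgdef]
      by_cases hrm : r ∈ Set.Ioo (e n) 1
      · simp only [Set.indicator_of_mem hrm, max_eq_left hrm.1.le, le_refl]
      · simp only [Set.indicator_of_notMem hrm]; exact zero_le
    have gsup : ∀ r, (⨆ n, g n r) = (Set.Ioo (0:ℝ) 1).indicator
        (fun t => ENNReal.ofReal (k t)) r := by
      intro r
      by_cases hr : r ∈ Set.Ioo (0:ℝ) 1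
      · rw [Set.indicator_of_mem hr]
        refine le_antisymm (iSup_le fun n => gler n r hr.1) ?_
        obtain ⟨n, hn⟩ := exists_nat_one_div_lt hr.1
        have hrn : r ∈ Set.Ioo (e n) 1 := ⟨hn, hr.2⟩
        have : g n r = ENNReal.ofReal (k r) := by
          rw [hgdef]; simp only [Set.indicator_of_mem hrn, max_eq_left hrn.1.le]
        rw [← this]; exact le_iSup (fun m => g m r) n
      · rw [Set.indicator_of_notMem hr]
        refine le_antisymm (iSup_le fun n => ?_) zero_le
        have : r ∉ Set.Ioo (e n) 1 := fun h => hr ⟨(hepos n).trans h.1, h.2⟩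
        rw [hgdef]; simp only [Set.indicator_of_notMem this]; exact le_refl _
    -- a.e. measurability of the kernel density on `(0, ∞)`
    have hae : AEStronglyMeasurable (fun r : ℝ => k r * r ^ (N-1))
        (volume.restrict (Set.Ioi (0:ℝ))) := by
      have hF := hkint.aestronglyMeasurable
      have hH : AEStronglyMeasurable
          (fun r : ℝ => (min 1 (r^2) * k r * r^(N-1)) * (min 1 (r^2))⁻¹)
          (volume.restrict (Set.Ioi (0:ℝ))) :=
        hF.mul ((measurable_const.min (measurable_id.pow_const 2)).inv).aestronglyMeasurable
      refine hH.congr ?_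
      filter_upwards [ae_restrict_mem measurableSet_Ioi] with r hr
      have hpos : (0:ℝ) < min 1 (r^2) := lt_min one_pos (pow_pos hr 2)
      have hne : min 1 (r^2) ≠ 0 := hpos.ne'
      have : (min 1 (r^2) * k r * r^(N-1)) * (min 1 (r^2))⁻¹
          = (min 1 (r^2) * (min 1 (r^2))⁻¹) * (k r * r^(N-1)) := by ring
      rw [this, mul_inv_cancel₀ hne, one_mul]
    -- divergence on `(0, ∞)` of the lintegral
    have hIoi : ∫⁻ r in Set.Ioi (0:ℝ), ENNReal.ofReal (k r * r^(N-1)) = ⊤ := by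
      by_contra h
      have hnonneg : 0 ≤ᵐ[volume.restrict (Set.Ioi (0:ℝ))] fun r : ℝ => k r * r^(N-1) := by
        filter_upwards [ae_restrict_mem measurableSet_Ioi] with r hr
        exact mul_nonneg (hk0 r hr) (pow_nonneg hr.le _)
      exact hknint ⟨hae, (hasFiniteIntegral_iff_ofReal hnonneg).2 (lt_top_iff_ne_top.2 h)⟩
    -- finiteness on `[1, ∞)`
    have hfin1 : ∫⁻ r in Set.Ici (1:ℝ), ENNReal.ofReal (k r * r^(N-1)) < ⊤ := by
      have heq : ∫⁻ r in Set.Ici (1:ℝ), ENNReal.ofReal (k r * r^(N-1))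
          = ∫⁻ r in Set.Ici (1:ℝ), ENNReal.ofReal (min 1 (r^2) * k r * r^(N-1)) := by
        refine setLIntegral_congr_fun measurableSet_Ici (fun r hr => ?_)
        have h1 : min 1 (r^2) = 1 := min_eq_left (one_le_pow₀ hr)
        rw [h1, one_mul]
      rw [heq]
      calc ∫⁻ r in Set.Ici (1:ℝ), ENNReal.ofReal (min 1 (r^2) * k r * r^(N-1))
          ≤ ∫⁻ r in Set.Ioi (0:ℝ), ENNReal.ofReal (min 1 (r^2) * k r * r^(N-1)) :=
            lintegral_mono_set fun x hx => Set.mem_Ioi.2 (lt_of_lt_of_le zero_lt_one hx)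
        _ ≤ ∫⁻ r in Set.Ioi (0:ℝ), ‖min 1 (r^2) * k r * r^(N-1)‖ₑ :=
            lintegral_ofReal_le_lintegral_enorm _
        _ < ⊤ := hkint.2
    -- divergence on `(0, 1)`
    have hIoo : ∫⁻ r in Set.Ioo (0:ℝ) 1, ENNReal.ofReal (k r * r^(N-1)) = ⊤ := by
      by_contra h
      have hdisj : Disjoint (Set.Ioo (0:ℝ) 1) (Set.Ici (1:ℝ)) :=
        Set.disjoint_left.2 fun x hx hx' => absurd hx.2 (not_lt.2 hx')
      have hunion := lintegral_union measurableSet_Ici hdisj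
        (f := fun r : ℝ => ENNReal.ofReal (k r * r^(N-1))) (μ := volume)
      rw [Set.Ioo_union_Ici_eq_Ioi zero_lt_one] at hunion
      rw [hunion] at hIoi
      exact (ENNReal.add_ne_top.2 ⟨h, hfin1.ne⟩) hIoi
    -- per-n polar coordinates
    have hdim : Module.finrank ℝ (Euc N) = N := finrank_euclideanSpace_fin
    have hpolar : ∀ n, ∫⁻ x : Euc N, g n ‖x‖ ∂volume
        = (volume : Measure (Euc N)).toSphere Set.univ *
          ∫⁻ r in Set.Ioi (0:ℝ), g n r * ENNReal.ofReal (r ^ (N - 1)) := by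
      intro n
      have := lintegral_fun_norm_polar (volume : Measure (Euc N)) (g n) (gmeas n)
      rwa [hdim] at this
    -- sup over n on the real side is ⊤
    have hsupR : (⨆ n, ∫⁻ r in Set.Ioi (0:ℝ), g n r * ENNReal.ofReal (r ^ (N-1))) = ⊤ := by
      have hM : Monotone fun n => fun r => g n r * ENNReal.ofReal (r ^ (N-1)) :=
        fun m n hmn r => mul_le_mul_left (gmono hmn r) _
      have hMCT := lintegral_iSup (μ := volume.restrict (Set.Ioi (0:ℝ)))
        (f := fun n => fun r => g n r * ENNReal.ofReal (r ^ (N-1)))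
        (fun n => (gmeas n).mul (measurable_id.pow_const _).ennreal_ofReal) hM
      have hsupfun : ∀ r : ℝ, (⨆ n, g n r * ENNReal.ofReal (r ^ (N-1)))
          = (Set.Ioo (0:ℝ) 1).indicator
              (fun t => ENNReal.ofReal (k t) * ENNReal.ofReal (t ^ (N-1))) r := by
        intro r
        rw [← ENNReal.iSup_mul, gsup r]
        by_cases hr : r ∈ Set.Ioo (0:ℝ) 1
        · rw [Set.indicator_of_mem hr, Set.indicator_of_mem hr]
        · rw [Set.indicator_of_notMem hr, Set.indicator_of_notMem hr, zero_mul]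
      calc (⨆ n, ∫⁻ r in Set.Ioi (0:ℝ), g n r * ENNReal.ofReal (r ^ (N-1)))
          = ∫⁻ r in Set.Ioi (0:ℝ), ⨆ n, g n r * ENNReal.ofReal (r ^ (N-1)) := hMCT.symm
        _ = ∫⁻ r in Set.Ioi (0:ℝ), (Set.Ioo (0:ℝ) 1).indicator
              (fun t => ENNReal.ofReal (k t) * ENNReal.ofReal (t ^ (N-1))) r :=
            lintegral_congr fun r => hsupfun r
        _ = ∫⁻ r in Set.Ioo (0:ℝ) 1,
              ENNReal.ofReal (k r) * ENNReal.ofReal (r ^ (N-1)) := by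
            rw [lintegral_indicator measurableSet_Ioo, Measure.restrict_restrict measurableSet_Ioo,
              Set.inter_eq_left.2 (fun x hx => hx.1)]
        _ = ∫⁻ r in Set.Ioo (0:ℝ) 1, ENNReal.ofReal (k r * r^(N-1)) := by
            refine setLIntegral_congr_fun measurableSet_Ioo (fun r hr => ?_)
            rw [← ENNReal.ofReal_mul (hk0 r hr.1)]
        _ = ⊤ := hIoo
    -- sup over n on the Euclidean side is ⊤
    have hc0 : (volume : Measure (Euc N)).toSphere Set.univ ≠ 0 := by
      rw [Measure.toSphere_apply_univ]
      refine mul_ne_zero ?_ (measure_ball_pos _ _ one_pos).ne'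
      simp [hdim, hNpos.ne']
    have hsupE : (⨆ n, ∫⁻ x : Euc N, g n ‖x‖ ∂volume) = ⊤ := by
      calc (⨆ n, ∫⁻ x : Euc N, g n ‖x‖ ∂volume)
          = ⨆ n, (volume : Measure (Euc N)).toSphere Set.univ *
              ∫⁻ r in Set.Ioi (0:ℝ), g n r * ENNReal.ofReal (r ^ (N-1)) :=
            iSup_congr hpolar
        _ = (volume : Measure (Euc N)).toSphere Set.univ *
              ⨆ n, ∫⁻ r in Set.Ioi (0:ℝ), g n r * ENNReal.ofReal (r ^ (N-1)) :=
            (ENNReal.mul_iSup _ _).symm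
        _ = ⊤ := by rw [hsupR, ENNReal.mul_top hc0]
    -- pick a good n
    have hlt : ENNReal.ofReal M + 1 < ⨆ n, ∫⁻ x : Euc N, g n ‖x‖ ∂volume := by
      rw [hsupE]
      exact ENNReal.add_lt_top.2 ⟨ENNReal.ofReal_lt_top, ENNReal.one_lt_top⟩
    obtain ⟨n, hn⟩ := lt_iSup_iff.mp hlt
    -- choose rstar
    have hke : 0 ≤ k (e n) := hk0 _ (hepos n)
    refine ⟨1 / (k (e n) + 1), by positivity, ?_⟩
    intro r hr hrs Ω hΩo hΩv x hx
    -- translation invariance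
    have htrans : ∫⁻ y : Euc N, g n (dist x y) ∂volume = ∫⁻ z : Euc N, g n ‖z‖ ∂volume := by
      rw [← lintegral_add_left_eq_self (fun y : Euc N => g n (dist x y)) x]
      exact lintegral_congr fun z => by rw [dist_self_add_right]
    -- the part over Ω is small
    have hA : ∫⁻ y in Ω, g n (dist x y) ∂volume ≤ 1 := by
      calc ∫⁻ y in Ω, g n (dist x y) ∂volume
          ≤ ∫⁻ _ in Ω, ENNReal.ofReal (k (e n)) ∂volume :=
            lintegral_mono fun y => gle n _
        _ = ENNReal.ofReal (k (e n)) * volume Ω := setLIntegral_const _ _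
        _ = ENNReal.ofReal (k (e n)) * ENNReal.ofReal r := by rw [hΩv]
        _ = ENNReal.ofReal (k (e n) * r) := (ENNReal.ofReal_mul hke).symm
        _ ≤ 1 := by
            rw [← ENNReal.ofReal_one]
            apply ENNReal.ofReal_le_ofReal
            have h1 : k (e n) * r ≤ k (e n) * (1 / (k (e n) + 1)) :=
              mul_le_mul_of_nonneg_left hrs.le hke
            have h2 : k (e n) * (1 / (k (e n) + 1)) ≤ 1 := by
              rw [mul_one_div, div_le_one (by positivity)]
              linarith
            linarith
    -- the part over Ωᶜ is below kappa
    have hB : ∫⁻ y in Ωᶜ, g n (dist x y) ∂volume ≤ kappaSet k Ω x := by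
      refine lintegral_mono_ae ?_
      filter_upwards [ae_restrict_mem hΩo.measurableSet.compl] with y hy
      have hxy : x ≠ y := fun h => hy (h ▸ hx)
      exact gler n _ (dist_pos.2 hxy)
    have hsum : ENNReal.ofReal M + 1
        ≤ (∫⁻ y in Ω, g n (dist x y) ∂volume) + ∫⁻ y in Ωᶜ, g n (dist x y) ∂volume := by
      rw [lintegral_add_compl _ hΩo.measurableSet, htrans]
      exact hn.le
    have hfinal : ENNReal.ofReal M + 1 ≤ kappaSet k Ω x + 1 := by
      calc ENNReal.ofReal M + 1
          ≤ (∫⁻ y in Ω, g n (dist x y) ∂volume) + ∫⁻ y in Ωᶜ, g n (dist x y) ∂volume := hsum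
        _ ≤ 1 + kappaSet k Ω x := add_le_add hA hB
        _ = kappaSet k Ω x + 1 := add_comm _ _
    exact (ENNReal.add_le_add_iff_right ENNReal.one_ne_top).1 hfinal
end
end

section
/- Assume k : (0,∞) → [0,∞) satisfies condition (k). Let U' ⊂ ℝ^N be open and v, φ ∈ V^J(U'). Suppose φ ≡ 0 on ℝ^N∖U for some open bounded set U ⊂ U' with dist(U, ℝ^N∖U') > 0. Then ∫_{ℝ^N}∫_{ℝ^N} |v(x)−v(y)| |φ(x)−φ(y)| k(|x−y|) dx dy < ∞, so that J(v,φ) := (1/2)∫_{ℝ^N}∫_{ℝ^N} (v(x)−v(y))(φ(x)−φ(y)) k(|x−y|) dx dy is well defined and finite. -/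
open MeasureTheory Metric Set Filter
open scoped ENNReal RealInnerProductSpace

noncomputable section

variable {N : ℕ}

namespace JFA

/-- Extended kernel with value `⊤` for nonpositive radii, making it globally antitone. -/
def KK (k : ℝ → ℝ) : ℝ → ℝ≥0∞ := fun r => if 0 < r then ENNReal.ofReal (k r) else ⊤

lemma KK_antitone {k : ℝ → ℝ} (hk : AntitoneOn k (Set.Ioi 0)) : Antitone (KK k) := by
  intro a b hab
  by_cases ha : 0 < a
  · have hb : 0 < b := ha.trans_le hab
    simp only [KK, if_pos ha, if_pos hb]
    exact ENNReal.ofReal_le_ofReal (hk ha hb hab)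
  · simp [KK, if_neg ha]

lemma KK_measurable {k : ℝ → ℝ} (hk : AntitoneOn k (Set.Ioi 0)) : Measurable (KK k) :=
  (KK_antitone hk).measurable

lemma KK_of_pos {k : ℝ → ℝ} {r : ℝ} (hr : 0 < r) : KK k r = ENNReal.ofReal (k r) := if_pos hr

lemma mul_self_le_sq_add_sq (a b : ℝ≥0∞) : a * b ≤ a ^ 2 + b ^ 2 := by
  rcases le_total a b with h | h
  · calc a * b ≤ b * b := mul_le_mul_left h b
    _ = b ^ 2 := (sq b).symm
    _ ≤ a ^ 2 + b ^ 2 := le_add_self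
  · calc a * b ≤ a * a := mul_le_mul_right h a
    _ = a ^ 2 := (sq a).symm
    _ ≤ a ^ 2 + b ^ 2 := le_self_add

section rewr
variable {k : ℝ → ℝ}

/-- pointwise rewriting of the goal integrand -/
lemma ofReal_prod_eq (hk : ∀ r : ℝ, 0 < r → 0 ≤ k r) {E : Type*} [MetricSpace E] (x y : E)
    (a b : ℝ) (hxa : x = y → a = 0) :
    ENNReal.ofReal (|a| * |b| * k (dist x y))
      = ENNReal.ofReal |a| * ENNReal.ofReal |b| * KK k (dist x y) := by
  rcases eq_or_ne x y with rfl | hxy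
  · simp [hxa rfl]
  · have hd : 0 < dist x y := dist_pos.2 hxy
    rw [KK_of_pos hd, ENNReal.ofReal_mul (by positivity), ENNReal.ofReal_mul (abs_nonneg a)]

/-- pointwise rewriting of the `rhoE` integrand -/
lemma ofReal_sq_eq (hk : ∀ r : ℝ, 0 < r → 0 ≤ k r) {E : Type*} [MetricSpace E] (x y : E)
    (a : ℝ) (hxa : x = y → a = 0) :
    ENNReal.ofReal (a ^ 2 * k (dist x y))
      = (ENNReal.ofReal |a|) ^ 2 * KK k (dist x y) := by
  rcases eq_or_ne x y with rfl | hxy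
  · simp [hxa rfl]
  · have hd : 0 < dist x y := dist_pos.2 hxy
    rw [KK_of_pos hd, ENNReal.ofReal_mul (by positivity), ← ENNReal.ofReal_pow (abs_nonneg a),
      sq_abs]

end rewr


section polar
open Module

lemma lintegral_fun_norm {E : Type*} [NormedAddCommGroup E] [NormedSpace ℝ E] [MeasurableSpace E]
    [BorelSpace E] [FiniteDimensional ℝ E] [Nontrivial E]
    (μ : Measure E) [μ.IsAddHaarMeasure] (g : ℝ → ℝ≥0∞) (hg : Measurable g) :
    ∫⁻ x, g ‖x‖ ∂μ = μ.toSphere Set.univ *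
      ∫⁻ r in Set.Ioi (0:ℝ), ENNReal.ofReal (r ^ (finrank ℝ E - 1)) * g r := by
  have hm : Measurable fun p : sphere (0:E) 1 × Set.Ioi (0:ℝ) => g p.2 :=
    hg.comp (measurable_subtype_coe.comp measurable_snd)
  calc
    ∫⁻ x, g ‖x‖ ∂μ = ∫⁻ x : ({(0:E)}ᶜ : Set E), g ‖x.1‖ ∂(μ.comap (↑)) := by
      rw [lintegral_subtype_comap (measurableSet_singleton _).compl fun x => g ‖x‖,
        restrict_compl_singleton]
    _ = ∫⁻ p : sphere (0:E) 1 × Set.Ioi (0:ℝ), g p.2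
          ∂(μ.toSphere.prod (.volumeIoiPow (finrank ℝ E - 1))) := by
      rw [← μ.measurePreserving_homeomorphUnitSphereProd.lintegral_comp hm]
      refine lintegral_congr fun x => ?_
      simp
    _ = μ.toSphere Set.univ * ∫⁻ r : Set.Ioi (0:ℝ), g r ∂(.volumeIoiPow (finrank ℝ E - 1)) := by
      rw [MeasureTheory.lintegral_prod _ hm.aemeasurable]
      simp [lintegral_const, mul_comm]
    _ = _ := by
      congr 1
      rw [Measure.volumeIoiPow, lintegral_withDensity_eq_lintegral_mul _
        ((measurable_subtype_coe.pow_const _).ennreal_ofReal)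
        (show Measurable fun r : Set.Ioi (0:ℝ) => g r.1 from hg.comp measurable_subtype_coe)]
      rw [← lintegral_subtype_comap measurableSet_Ioi
        fun r => ENNReal.ofReal (r ^ (finrank ℝ E - 1)) * g r]
      rfl

end polar


section lemmas
variable {α : Type*} [MeasurableSpace α] {μ : Measure α}

lemma lintegral_sq_lt_top {u : α → ℝ} (hu : MemLp u 2 μ) :
    ∫⁻ x, ENNReal.ofReal (u x ^ 2) ∂μ < ⊤ := by
  have h := (hu.integrable_norm_rpow two_ne_zero ENNReal.ofNat_ne_top).lintegral_lt_top
  refine lt_of_eq_of_lt ?_ h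
  refine lintegral_congr fun x => ?_
  rw [ENNReal.toReal_ofNat, Real.norm_eq_abs, show ((2:ℝ)) = ((2:ℕ):ℝ) by norm_num,
    Real.rpow_natCast, sq_abs]

lemma ofReal_abs_le_essSup {u : α → ℝ} :
    ∀ᵐ x ∂μ, ENNReal.ofReal |u x| ≤ eLpNormEssSup u μ := by
  filter_upwards [ae_le_eLpNormEssSup (f := u) (μ := μ)] with x hx
  rwa [← Real.enorm_eq_ofReal_abs]

lemma setLIntegral_sq_lt_top {s : Set α} (hs : μ s < ⊤) {u u₁ u₂ : α → ℝ}
    (hu : u =ᵐ[μ] u₁ + u₂) (h1 : MemLp u₁ 2 μ) (h2 : MemLp u₂ ⊤ μ) :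
    ∫⁻ x in s, ENNReal.ofReal (u x ^ 2) ∂μ < ⊤ := by
  set C2 : ℝ≥0∞ := eLpNormEssSup u₂ μ with hC2def
  have hC2 : C2 < ⊤ := by
    have := h2.2; rwa [eLpNorm_exponent_top] at this
  have hb : ∀ᵐ x ∂μ.restrict s, ENNReal.ofReal (u x ^ 2)
      ≤ 2 * ENNReal.ofReal (u₁ x ^ 2) + 2 * C2 ^ 2 := by
    filter_upwards [ae_restrict_of_ae (ofReal_abs_le_essSup (u := u₂)),
      ae_restrict_of_ae hu] with x hx hux
    have h1' : ENNReal.ofReal (u x ^ 2) ≤ 2 * ENNReal.ofReal (u₁ x ^ 2)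
        + 2 * ENNReal.ofReal (u₂ x ^ 2) := by
      rw [← ENNReal.ofReal_ofNat, ← ENNReal.ofReal_mul (by norm_num),
        ← ENNReal.ofReal_mul (by norm_num), ← ENNReal.ofReal_add (by positivity) (by positivity)]
      refine ENNReal.ofReal_le_ofReal ?_
      rw [hux]; simp only [Pi.add_apply]
      calc (u₁ x + u₂ x) ^ 2 ≤ (u₁ x + u₂ x) ^ 2 + (u₁ x - u₂ x) ^ 2 := le_add_of_nonneg_right (sq_nonneg _)
        _ = 2 * u₁ x ^ 2 + 2 * u₂ x ^ 2 := by ring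
    refine h1'.trans (add_le_add_right ?_ _)
    refine mul_le_mul_right ?_ _
    have : ENNReal.ofReal (u₂ x ^ 2) = ENNReal.ofReal |u₂ x| ^ 2 := by
      rw [← ENNReal.ofReal_pow (abs_nonneg _), sq_abs]
    rw [this]
    exact pow_le_pow_left' hx 2
  calc ∫⁻ x in s, ENNReal.ofReal (u x ^ 2) ∂μ
      ≤ ∫⁻ x in s, (2 * ENNReal.ofReal (u₁ x ^ 2) + 2 * C2 ^ 2) ∂μ := lintegral_mono_ae hb
    _ = (∫⁻ x in s, 2 * ENNReal.ofReal (u₁ x ^ 2) ∂μ) + (2 * C2 ^ 2) * μ s := by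
        rw [lintegral_add_right _ measurable_const, lintegral_const,
          Measure.restrict_apply MeasurableSet.univ, Set.univ_inter]
    _ ≤ 2 * (∫⁻ x, ENNReal.ofReal (u₁ x ^ 2) ∂μ) + (2 * C2 ^ 2) * μ s := by
        rw [lintegral_const_mul' _ _ (by norm_num)]
        exact add_le_add_left (mul_le_mul_right (setLIntegral_le_lintegral _ _) 2) _
    _ < ⊤ := by
        have h₁ := lintegral_sq_lt_top h1
        have : C2 ^ 2 < ⊤ := ENNReal.pow_lt_top hC2
        apply ENNReal.add_lt_top.2
        constructor
        · exact ENNReal.mul_lt_top (by norm_num) h₁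
        · exact ENNReal.mul_lt_top (ENNReal.mul_lt_top (by norm_num) this) hs

end lemmas


section C1
open Module

lemma tail_lt_top {N : ℕ} (hN : N ≠ 0) {k : ℝ → ℝ}
    (hk0 : ∀ r : ℝ, 0 < r → 0 ≤ k r) (hka : AntitoneOn k (Set.Ioi 0))
    (hki : IntegrableOn (fun r : ℝ => min 1 (r ^ 2) * k r * r ^ (N - 1)) (Set.Ioi 0))
    {d : ℝ} (hd : 0 < d) :
    ∫⁻ z : EuclideanSpace ℝ (Fin N), (Set.Ici d).indicator (KK k) ‖z‖ < ⊤ := by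
  haveI : Nonempty (Fin N) := ⟨⟨0, Nat.pos_of_ne_zero hN⟩⟩
  haveI : Nontrivial (EuclideanSpace ℝ (Fin N)) := inferInstance
  have hmeas : Measurable ((Set.Ici d).indicator (KK k)) :=
    (KK_measurable hka).indicator measurableSet_Ici
  rw [lintegral_fun_norm volume _ hmeas, finrank_euclideanSpace_fin]
  refine ENNReal.mul_lt_top (measure_lt_top _ _) ?_
  have hmin : (0:ℝ) < min 1 (d ^ 2) := lt_min one_pos (by positivity)
  set c : ℝ := (min 1 (d ^ 2))⁻¹ with hcdef
  calc ∫⁻ r in Set.Ioi (0:ℝ), ENNReal.ofReal (r ^ (N - 1)) * (Set.Ici d).indicator (KK k) r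
      ≤ ∫⁻ r in Set.Ioi (0:ℝ),
          ENNReal.ofReal c * ENNReal.ofReal (min 1 (r ^ 2) * k r * r ^ (N - 1)) := by
        refine lintegral_mono_ae ?_
        filter_upwards [ae_restrict_mem measurableSet_Ioi] with r hr
        simp only [Set.mem_Ioi] at hr
        by_cases hrd : r ∈ Set.Ici d
        · rw [Set.indicator_of_mem hrd, KK_of_pos hr,
            ← ENNReal.ofReal_mul (by positivity), ← ENNReal.ofReal_mul (by positivity)]
          refine ENNReal.ofReal_le_ofReal ?_
          have hd2 : min 1 (d ^ 2) ≤ min 1 (r ^ 2) :=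
            min_le_min le_rfl (pow_le_pow_left₀ hd.le hrd 2)
          have h1 : (1:ℝ) ≤ c * min 1 (r ^ 2) := by
            rw [hcdef]
            calc (1:ℝ) = (min 1 (d ^ 2))⁻¹ * min 1 (d ^ 2) := (inv_mul_cancel₀ hmin.ne').symm
              _ ≤ (min 1 (d ^ 2))⁻¹ * min 1 (r ^ 2) :=
                  mul_le_mul_of_nonneg_left hd2 (by positivity)
          have hk0' : 0 ≤ k r := hk0 r hr
          calc r ^ (N - 1) * k r = 1 * (k r * r ^ (N - 1)) := by ring
            _ ≤ (c * min 1 (r ^ 2)) * (k r * r ^ (N - 1)) :=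
                mul_le_mul_of_nonneg_right h1 (by positivity)
            _ = c * (min 1 (r ^ 2) * k r * r ^ (N - 1)) := by ring
        · rw [Set.indicator_of_notMem hrd, mul_zero]
          exact zero_le
    _ = ENNReal.ofReal c * ∫⁻ r in Set.Ioi (0:ℝ),
          ENNReal.ofReal (min 1 (r ^ 2) * k r * r ^ (N - 1)) :=
        lintegral_const_mul' _ _ ENNReal.ofReal_ne_top
    _ < ⊤ := ENNReal.mul_lt_top ENNReal.ofReal_lt_top hki.lintegral_lt_top

end C1


section kappa

lemma kappa_le {N : ℕ} {k : ℝ → ℝ} {U' : Set (EuclideanSpace ℝ (Fin N))}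
    (hU' : MeasurableSet U') {d : ℝ} (x : EuclideanSpace ℝ (Fin N))
    (hx : ∀ y, y ∉ U' → d ≤ dist x y) :
    ∫⁻ y in U'ᶜ, KK k (dist x y)
      ≤ ∫⁻ z : EuclideanSpace ℝ (Fin N), (Set.Ici d).indicator (KK k) ‖z‖ := by
  calc ∫⁻ y in U'ᶜ, KK k (dist x y)
      ≤ ∫⁻ y in U'ᶜ, (Set.Ici d).indicator (KK k) (dist x y) := by
        refine lintegral_mono_ae ?_
        filter_upwards [ae_restrict_mem hU'.compl] with y hy
        exact (Set.indicator_of_mem (Set.mem_Ici.2 (hx y hy)) (KK k)).symm.le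
    _ ≤ ∫⁻ y, (Set.Ici d).indicator (KK k) (dist x y) := setLIntegral_le_lintegral _ _
    _ = ∫⁻ y, (Set.Ici d).indicator (KK k) ‖y - x‖ := by
        refine lintegral_congr fun y => ?_
        rw [dist_eq_norm, norm_sub_rev]
    _ = ∫⁻ z : EuclideanSpace ℝ (Fin N), (Set.Ici d).indicator (KK k) ‖z‖ :=
        lintegral_sub_right_eq_self (fun z => (Set.Ici d).indicator (KK k) ‖z‖) x

end kappa


section main

lemma ofReal_abs_le_sq_add_one (t : ℝ) :
    ENNReal.ofReal |t| ≤ ENNReal.ofReal (t ^ 2) + 1 := by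
  rw [← ENNReal.ofReal_one, ← ENNReal.ofReal_add (sq_nonneg _) zero_le_one]
  refine ENNReal.ofReal_le_ofReal ?_
  nlinarith [sq_nonneg (|t| - 1), sq_abs t]

lemma main_part {N : ℕ} {k : ℝ → ℝ} (hka : AntitoneOn k (Set.Ioi 0))
    {U U' : Set (EuclideanSpace ℝ (Fin N))} (hUm : MeasurableSet U) (hU' : MeasurableSet U')
    (hUvol : volume U < ⊤)
    {d : ℝ} (hd : 0 < d) (hdist : ∀ x ∈ U, ∀ y, y ∉ U' → d ≤ dist x y)
    (hC1 : (∫⁻ z : EuclideanSpace ℝ (Fin N), (Set.Ici d).indicator (KK k) ‖z‖) < ⊤)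
    {w ψ : EuclideanSpace ℝ (Fin N) → ℝ} (hw : Measurable w) (hψ : Measurable ψ)
    {w₁ w₂ : EuclideanSpace ℝ (Fin N) → ℝ}
    (hw12 : w =ᵐ[volume] w₁ + w₂) (h1 : MemLp w₁ 2 (volume : Measure (EuclideanSpace ℝ (Fin N))))
    (h2 : MemLp w₂ ⊤ (volume : Measure (EuclideanSpace ℝ (Fin N))))
    (hwU : ∫⁻ x in U, ENNReal.ofReal (w x ^ 2) < ⊤)
    (hψU : ∫⁻ x in U, ENNReal.ofReal (ψ x ^ 2) < ⊤) :
    (∫⁻ x in U, ∫⁻ y in U'ᶜ,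
      ENNReal.ofReal |w x - w y| * ENNReal.ofReal |ψ x| * KK k (dist x y)) < ⊤ := by
  set C1 : ℝ≥0∞ := ∫⁻ z : EuclideanSpace ℝ (Fin N), (Set.Ici d).indicator (KK k) ‖z‖ with hC1def
  set C2 : ℝ≥0∞ := eLpNormEssSup w₂ volume with hC2def
  have hC2 : C2 < ⊤ := by have := h2.2; rwa [eLpNorm_exponent_top] at this
  have Ev1 : (∫⁻ y, ENNReal.ofReal (w₁ y ^ 2)) < ⊤ := lintegral_sq_lt_top h1
  have hKKd : KK k d ≠ ⊤ := by rw [KK_of_pos hd]; exact ENNReal.ofReal_ne_top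
  set E : ℝ≥0∞ := (∫⁻ y, ENNReal.ofReal (w₁ y ^ 2)) * KK k d with hEdef
  have hE : E < ⊤ := ENNReal.mul_lt_top Ev1 (lt_top_iff_ne_top.2 hKKd)
  set D : ℝ≥0∞ := C1 + (C2 + 1) * C1 + E with hDdef
  have hD : D ≠ ⊤ := by
    refine ENNReal.add_ne_top.2 ⟨ENNReal.add_ne_top.2 ⟨hC1.ne, ?_⟩, hE.ne⟩
    exact (ENNReal.mul_lt_top (ENNReal.add_lt_top.2 ⟨hC2, ENNReal.one_lt_top⟩) hC1).ne
  -- inner estimate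
  have step1 : ∀ x ∈ U, (∫⁻ y in U'ᶜ,
      ENNReal.ofReal |w x - w y| * ENNReal.ofReal |ψ x| * KK k (dist x y))
      ≤ ENNReal.ofReal |ψ x| * ((ENNReal.ofReal |w x| + C2 + 1) * C1 + E) := by
    intro x hx
    have hKm : Measurable fun y : EuclideanSpace ℝ (Fin N) => KK k (dist x y) :=
      (KK_measurable hka).comp (continuous_const.dist continuous_id).measurable
    calc ∫⁻ y in U'ᶜ, ENNReal.ofReal |w x - w y| * ENNReal.ofReal |ψ x| * KK k (dist x y)
        ≤ ∫⁻ y in U'ᶜ, ENNReal.ofReal |ψ x| *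
            (((ENNReal.ofReal |w x| + C2 + 1) + ENNReal.ofReal (w₁ y ^ 2)) * KK k (dist x y)) := by
          refine lintegral_mono_ae ?_
          filter_upwards [ae_restrict_of_ae hw12,
            ae_restrict_of_ae (ofReal_abs_le_essSup (u := w₂))] with y h12 hb
          have habs : ENNReal.ofReal |w x - w y|
              ≤ (ENNReal.ofReal |w x| + C2 + 1) + ENNReal.ofReal (w₁ y ^ 2) := by
            calc ENNReal.ofReal |w x - w y|
                ≤ ENNReal.ofReal (|w x| + (|w₁ y| + |w₂ y|)) := by
                  refine ENNReal.ofReal_le_ofReal ?_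
                  calc |w x - w y| ≤ |w x| + |w y| := abs_sub _ _
                    _ ≤ |w x| + (|w₁ y| + |w₂ y|) := by
                        rw [h12]; exact add_le_add_right (abs_add_le _ _) _
              _ = ENNReal.ofReal |w x| + (ENNReal.ofReal |w₁ y| + ENNReal.ofReal |w₂ y|) := by
                  rw [ENNReal.ofReal_add (abs_nonneg _) (by positivity),
                    ENNReal.ofReal_add (abs_nonneg _) (abs_nonneg _)]
              _ ≤ ENNReal.ofReal |w x| + ((ENNReal.ofReal (w₁ y ^ 2) + 1) + C2) := by
                  gcongr <;> first
                    | exact ofReal_abs_le_sq_add_one _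
                    | exact hb
              _ = (ENNReal.ofReal |w x| + C2 + 1) + ENNReal.ofReal (w₁ y ^ 2) := by ring
          calc ENNReal.ofReal |w x - w y| * ENNReal.ofReal |ψ x| * KK k (dist x y)
              = ENNReal.ofReal |ψ x| * (ENNReal.ofReal |w x - w y| * KK k (dist x y)) := by ring
            _ ≤ ENNReal.ofReal |ψ x| *
                (((ENNReal.ofReal |w x| + C2 + 1) + ENNReal.ofReal (w₁ y ^ 2))
                  * KK k (dist x y)) := by gcongr
      _ = ENNReal.ofReal |ψ x| * ∫⁻ y in U'ᶜ,
            ((ENNReal.ofReal |w x| + C2 + 1) + ENNReal.ofReal (w₁ y ^ 2)) * KK k (dist x y) :=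
          lintegral_const_mul' _ _ ENNReal.ofReal_ne_top
      _ ≤ ENNReal.ofReal |ψ x| * ((ENNReal.ofReal |w x| + C2 + 1) * C1 + E) := by
          refine mul_le_mul_right ?_ _
          have hc : (ENNReal.ofReal |w x| + C2 + 1) ≠ ⊤ := by
            refine ENNReal.add_ne_top.2 ⟨ENNReal.add_ne_top.2 ⟨ENNReal.ofReal_ne_top, hC2.ne⟩,
              ENNReal.one_ne_top⟩
          calc ∫⁻ y in U'ᶜ,
              ((ENNReal.ofReal |w x| + C2 + 1) + ENNReal.ofReal (w₁ y ^ 2)) * KK k (dist x y)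
              = ∫⁻ y in U'ᶜ, ((ENNReal.ofReal |w x| + C2 + 1) * KK k (dist x y)
                  + ENNReal.ofReal (w₁ y ^ 2) * KK k (dist x y)) := by
                refine lintegral_congr fun y => ?_; ring
            _ = (∫⁻ y in U'ᶜ, (ENNReal.ofReal |w x| + C2 + 1) * KK k (dist x y))
                  + ∫⁻ y in U'ᶜ, ENNReal.ofReal (w₁ y ^ 2) * KK k (dist x y) :=
                lintegral_add_left (measurable_const.mul hKm) _
            _ = (ENNReal.ofReal |w x| + C2 + 1) * (∫⁻ y in U'ᶜ, KK k (dist x y))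
                  + ∫⁻ y in U'ᶜ, ENNReal.ofReal (w₁ y ^ 2) * KK k (dist x y) := by
                rw [lintegral_const_mul' _ _ hc]
            _ ≤ (ENNReal.ofReal |w x| + C2 + 1) * C1 + E := by
                refine add_le_add (mul_le_mul_right (kappa_le hU' x (hdist x hx)) _) ?_
                calc ∫⁻ y in U'ᶜ, ENNReal.ofReal (w₁ y ^ 2) * KK k (dist x y)
                    ≤ ∫⁻ y in U'ᶜ, ENNReal.ofReal (w₁ y ^ 2) * KK k d := by
                      refine lintegral_mono_ae ?_
                      filter_upwards [ae_restrict_mem hU'.compl] with y hy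
                      exact mul_le_mul_right (KK_antitone hka (hdist x hx y hy)) _
                  _ = (∫⁻ y in U'ᶜ, ENNReal.ofReal (w₁ y ^ 2)) * KK k d :=
                      lintegral_mul_const' _ _ hKKd
                  _ ≤ E := by
                      rw [hEdef]
                      exact mul_le_mul_left (setLIntegral_le_lintegral _ _) _
  -- outer estimate
  calc (∫⁻ x in U, ∫⁻ y in U'ᶜ,
        ENNReal.ofReal |w x - w y| * ENNReal.ofReal |ψ x| * KK k (dist x y))
      ≤ ∫⁻ x in U, (ENNReal.ofReal (ψ x ^ 2) + ENNReal.ofReal (w x ^ 2) + 1) * D := by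
        refine lintegral_mono_ae ?_
        filter_upwards [ae_restrict_mem hUm] with x hx
        refine (step1 x hx).trans ?_
        set s := ENNReal.ofReal (ψ x ^ 2)
        set t := ENNReal.ofReal (w x ^ 2)
        set p := ENNReal.ofReal |ψ x| with hpdef
        set q := ENNReal.ofReal |w x| with hqdef
        have hpq : p * q ≤ s + t := by
          have h1' : p ^ 2 = s := by
            rw [hpdef, ← ENNReal.ofReal_pow (abs_nonneg _), sq_abs]
          have h2' : q ^ 2 = t := by
            rw [hqdef, ← ENNReal.ofReal_pow (abs_nonneg _), sq_abs]
          rw [← h1', ← h2']; exact mul_self_le_sq_add_sq p q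
        have hp1 : p ≤ s + 1 := ofReal_abs_le_sq_add_one _
        calc p * ((q + C2 + 1) * C1 + E)
            = p * q * C1 + p * ((C2 + 1) * C1) + p * E := by ring
          _ ≤ (s + t) * C1 + (s + 1) * ((C2 + 1) * C1) + (s + 1) * E := by gcongr
          _ ≤ (s + t + 1) * C1 + (s + t + 1) * ((C2 + 1) * C1) + (s + t + 1) * E := by
              have h3 : s + 1 ≤ s + t + 1 := add_le_add_left le_self_add 1
              have h4 : s + t ≤ s + t + 1 := le_self_add
              exact add_le_add (add_le_add (mul_le_mul_left h4 _)
                (mul_le_mul_left h3 _)) (mul_le_mul_left h3 _)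
          _ = (s + t + 1) * D := by rw [hDdef]; ring
    _ = ((∫⁻ x in U, ENNReal.ofReal (ψ x ^ 2)) + (∫⁻ x in U, ENNReal.ofReal (w x ^ 2))
          + volume U) * D := by
        rw [lintegral_mul_const' _ _ hD]
        congr 1
        rw [lintegral_add_left (show Measurable fun x => ENNReal.ofReal (ψ x ^ 2) + ENNReal.ofReal (w x ^ 2) from ((hψ.pow_const 2).ennreal_ofReal).add
            ((hw.pow_const 2).ennreal_ofReal)),
          lintegral_add_left ((hψ.pow_const 2).ennreal_ofReal), lintegral_const,
          Measure.restrict_apply MeasurableSet.univ, Set.univ_inter, one_mul]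
    _ < ⊤ := ENNReal.mul_lt_top
        (ENNReal.add_lt_top.2 ⟨ENNReal.add_lt_top.2 ⟨hψU, hwU⟩, hUvol⟩)
        (lt_top_iff_ne_top.2 hD)

end main


section dbl
variable {α : Type*} [MeasurableSpace α] {μ : Measure α}

lemma indicator_one_ne_top (s : Set α) (x : α) : s.indicator (1 : α → ℝ≥0∞) x ≠ ⊤ := by
  by_cases hx : x ∈ s <;> simp [hx]

lemma double_indicator_eq {s t : Set α} (hs : MeasurableSet s) (ht : MeasurableSet t)
    (f : α → α → ℝ≥0∞) :
    (∫⁻ x, ∫⁻ y, (s.indicator 1 x * t.indicator 1 y) * f x y ∂μ ∂μ)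
      = ∫⁻ x in s, ∫⁻ y in t, f x y ∂μ ∂μ := by
  have key : ∀ (u : Set α), MeasurableSet u → ∀ g : α → ℝ≥0∞,
      (∫⁻ x, u.indicator 1 x * g x ∂μ) = ∫⁻ x in u, g x ∂μ := by
    intro u hu g
    rw [← lintegral_indicator hu]
    refine lintegral_congr fun x => ?_
    by_cases hx : x ∈ u <;> simp [hx]
  have inner : ∀ x, (∫⁻ y, (s.indicator 1 x * t.indicator 1 y) * f x y ∂μ)
      = s.indicator 1 x * ∫⁻ y in t, f x y ∂μ := by
    intro x
    calc (∫⁻ y, (s.indicator 1 x * t.indicator 1 y) * f x y ∂μ)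
        = ∫⁻ y, t.indicator 1 y * (s.indicator 1 x * f x y) ∂μ :=
          lintegral_congr fun y => by ring
      _ = ∫⁻ y in t, s.indicator 1 x * f x y ∂μ := key t ht _
      _ = s.indicator 1 x * ∫⁻ y in t, f x y ∂μ :=
          lintegral_const_mul' _ _ (indicator_one_ne_top s x)
  rw [lintegral_congr inner, key s hs]

end dbl


section bound
variable {α : Type*} [MetricSpace α]

lemma sum_bound {k : ℝ → ℝ} {U U' : Set α} (hUU' : U ⊆ U')
    {w ψ : α → ℝ} (hψ0 : ∀ x, x ∉ U → ψ x = 0) (x y : α) :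
    ENNReal.ofReal |w x - w y| * ENNReal.ofReal |ψ x - ψ y| * KK k (dist x y) ≤
      (U'.indicator 1 x * U'.indicator 1 y) *
        (((ENNReal.ofReal |w x - w y|) ^ 2 + (ENNReal.ofReal |ψ x - ψ y|) ^ 2) * KK k (dist x y))
      + (U.indicator 1 x * (U'ᶜ).indicator 1 y) *
        (ENNReal.ofReal |w x - w y| * ENNReal.ofReal |ψ x| * KK k (dist x y))
      + (U.indicator 1 y * (U'ᶜ).indicator 1 x) *
        (ENNReal.ofReal |w y - w x| * ENNReal.ofReal |ψ y| * KK k (dist y x)) := by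
  by_cases hx' : x ∈ U'
  · by_cases hy' : y ∈ U'
    · refine le_trans ?_ (le_self_add.trans le_self_add)
      rw [Set.indicator_of_mem hx', Set.indicator_of_mem hy']
      simp only [Pi.one_apply, one_mul]
      exact mul_le_mul_left (mul_self_le_sq_add_sq _ _) _
    · have hy : y ∉ U := fun h => hy' (hUU' h)
      by_cases hx : x ∈ U
      · refine le_trans ?_ ((le_add_self).trans le_self_add)
        rw [hψ0 y hy, sub_zero, Set.indicator_of_mem hx,
          Set.indicator_of_mem (Set.mem_compl hy')]
        simp only [Pi.one_apply, one_mul]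
        exact le_rfl
      · rw [hψ0 y hy, hψ0 x hx, sub_zero, abs_zero, ENNReal.ofReal_zero, mul_zero, zero_mul]
        exact zero_le
  · have hx : x ∉ U := fun h => hx' (hUU' h)
    by_cases hy : y ∈ U
    · refine le_trans ?_ le_add_self
      rw [hψ0 x hx, zero_sub, abs_neg, Set.indicator_of_mem hy,
        Set.indicator_of_mem (Set.mem_compl hx'), abs_sub_comm (w x) (w y), dist_comm x y]
      simp only [Pi.one_apply, one_mul]
      exact le_rfl
    · rw [hψ0 y hy, hψ0 x hx, sub_zero, abs_zero, ENNReal.ofReal_zero, mul_zero, zero_mul]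
      exact zero_le

end bound


section total

variable {N : ℕ}

local notation "E" => EuclideanSpace ℝ (Fin N)

lemma total_lt_top (hN : N ≠ 0) {k : ℝ → ℝ}
    (hk0 : ∀ r : ℝ, 0 < r → 0 ≤ k r) (hka : AntitoneOn k (Set.Ioi 0))
    (hki : IntegrableOn (fun r : ℝ => min 1 (r ^ 2) * k r * r ^ (N - 1)) (Set.Ioi 0))
    {U U' : Set (EuclideanSpace ℝ (Fin N))} (hUm : MeasurableSet U) (hU'm : MeasurableSet U')
    (hUU' : U ⊆ U') (hUvol : volume U < ⊤)
    {d : ℝ} (hd : 0 < d) (hdist : ∀ x ∈ U, ∀ y, y ∉ U' → d ≤ dist x y)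
    {w ψ : EuclideanSpace ℝ (Fin N) → ℝ} (hwm : Measurable w) (hψm : Measurable ψ)
    (hψ0 : ∀ x, x ∉ U → ψ x = 0)
    {w₁ w₂ ψ₁ ψ₂ : EuclideanSpace ℝ (Fin N) → ℝ}
    (hw12 : w =ᵐ[volume] w₁ + w₂)
    (hW1 : MemLp w₁ 2 (volume : Measure (EuclideanSpace ℝ (Fin N))))
    (hW2 : MemLp w₂ ⊤ (volume : Measure (EuclideanSpace ℝ (Fin N))))
    (hψ12 : ψ =ᵐ[volume] ψ₁ + ψ₂)
    (hP1 : MemLp ψ₁ 2 (volume : Measure (EuclideanSpace ℝ (Fin N))))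
    (hP2 : MemLp ψ₂ ⊤ (volume : Measure (EuclideanSpace ℝ (Fin N))))
    (hρw : (∫⁻ x in U', ∫⁻ y in U',
        (ENNReal.ofReal |w x - w y|) ^ 2 * KK k (dist x y)) < ⊤)
    (hρψ : (∫⁻ x in U', ∫⁻ y in U',
        (ENNReal.ofReal |ψ x - ψ y|) ^ 2 * KK k (dist x y)) < ⊤) :
    (∫⁻ x, ∫⁻ y,
      ENNReal.ofReal |w x - w y| * ENNReal.ofReal |ψ x - ψ y| * KK k (dist x y)) < ⊤ := by
  have hwU : (∫⁻ x in U, ENNReal.ofReal (w x ^ 2)) < ⊤ :=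
    setLIntegral_sq_lt_top hUvol hw12 hW1 hW2
  have hψU : (∫⁻ x in U, ENNReal.ofReal (ψ x ^ 2)) < ⊤ :=
    setLIntegral_sq_lt_top hUvol hψ12 hP1 hP2
  have hC1 : (∫⁻ z : E, (Set.Ici d).indicator (KK k) ‖z‖) < ⊤ :=
    tail_lt_top hN hk0 hka hki hd
  have hMAIN : (∫⁻ x in U, ∫⁻ y in U'ᶜ,
      ENNReal.ofReal |w x - w y| * ENNReal.ofReal |ψ x| * KK k (dist x y)) < ⊤ :=
    main_part hka hUm hU'm hUvol hd hdist hC1 hwm hψm hw12 hW1 hW2 hwU hψU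
  -- measurability of the building blocks
  have mW : Measurable fun p : E × E => ENNReal.ofReal |w p.1 - w p.2| :=
    (((hwm.comp measurable_fst).sub (hwm.comp measurable_snd)).abs).ennreal_ofReal
  have mP : Measurable fun p : E × E => ENNReal.ofReal |ψ p.1 - ψ p.2| :=
    (((hψm.comp measurable_fst).sub (hψm.comp measurable_snd)).abs).ennreal_ofReal
  have mP1 : Measurable fun p : E × E => ENNReal.ofReal |ψ p.1| :=
    ((hψm.comp measurable_fst).abs).ennreal_ofReal
  have mK : Measurable fun p : E × E => KK k (dist p.1 p.2) :=
    (KK_measurable hka).comp measurable_dist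
  have mIU : Measurable (U.indicator (1 : E → ℝ≥0∞)) := measurable_one.indicator hUm
  have mIU' : Measurable (U'.indicator (1 : E → ℝ≥0∞)) := measurable_one.indicator hU'm
  have mIC : Measurable ((U'ᶜ).indicator (1 : E → ℝ≥0∞)) := measurable_one.indicator hU'm.compl
  have mG1 : Measurable fun p : E × E => (U'.indicator 1 p.1 * U'.indicator 1 p.2) *
      (((ENNReal.ofReal |w p.1 - w p.2|) ^ 2 + (ENNReal.ofReal |ψ p.1 - ψ p.2|) ^ 2)
        * KK k (dist p.1 p.2)) :=
    ((mIU'.comp measurable_fst).mul (mIU'.comp measurable_snd)).mul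
      (((mW.pow_const 2).add (mP.pow_const 2)).mul mK)
  have mG2 : Measurable fun p : E × E => (U.indicator 1 p.1 * (U'ᶜ).indicator 1 p.2) *
      (ENNReal.ofReal |w p.1 - w p.2| * ENNReal.ofReal |ψ p.1| * KK k (dist p.1 p.2)) :=
    ((mIU.comp measurable_fst).mul (mIC.comp measurable_snd)).mul ((mW.mul mP1).mul mK)
  have mG3 : Measurable fun p : E × E => (U.indicator 1 p.2 * (U'ᶜ).indicator 1 p.1) *
      (ENNReal.ofReal |w p.2 - w p.1| * ENNReal.ofReal |ψ p.2| * KK k (dist p.2 p.1)) :=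
    mG2.comp measurable_swap
  -- splitting a triple sum
  have step : ∀ F G H : E → E → ℝ≥0∞, Measurable (Function.uncurry F) →
      Measurable (Function.uncurry G) → Measurable (Function.uncurry H) →
      (∫⁻ x, ∫⁻ y, (F x y + G x y + H x y)) =
        (∫⁻ x, ∫⁻ y, F x y) + (∫⁻ x, ∫⁻ y, G x y) + (∫⁻ x, ∫⁻ y, H x y) := by
    intro F G H hF hG hH
    have inner : ∀ x, (∫⁻ y, (F x y + G x y + H x y)) =
        (∫⁻ y, F x y) + (∫⁻ y, G x y) + (∫⁻ y, H x y) := by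
      intro x
      rw [lintegral_add_left (show Measurable fun y => F x y + G x y from
          (hF.comp measurable_prodMk_left).add (hG.comp measurable_prodMk_left)),
        lintegral_add_left (show Measurable fun y => F x y from
          hF.comp measurable_prodMk_left)]
    rw [lintegral_congr inner,
      lintegral_add_left (show Measurable fun x => (∫⁻ y, F x y) + ∫⁻ y, G x y from
        (hF.lintegral_prod_right'.add hG.lintegral_prod_right')),
      lintegral_add_left (show Measurable fun x => ∫⁻ y, F x y from hF.lintegral_prod_right')]
  calc (∫⁻ x, ∫⁻ y,
        ENNReal.ofReal |w x - w y| * ENNReal.ofReal |ψ x - ψ y| * KK k (dist x y))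
      ≤ ∫⁻ x, ∫⁻ y,
          ((U'.indicator 1 x * U'.indicator 1 y) *
            (((ENNReal.ofReal |w x - w y|) ^ 2 + (ENNReal.ofReal |ψ x - ψ y|) ^ 2)
              * KK k (dist x y))
          + (U.indicator 1 x * (U'ᶜ).indicator 1 y) *
            (ENNReal.ofReal |w x - w y| * ENNReal.ofReal |ψ x| * KK k (dist x y))
          + (U.indicator 1 y * (U'ᶜ).indicator 1 x) *
            (ENNReal.ofReal |w y - w x| * ENNReal.ofReal |ψ y| * KK k (dist y x))) :=
        lintegral_mono fun x => lintegral_mono fun y => sum_bound hUU' hψ0 x y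
    _ = (∫⁻ x, ∫⁻ y, (U'.indicator 1 x * U'.indicator 1 y) *
            (((ENNReal.ofReal |w x - w y|) ^ 2 + (ENNReal.ofReal |ψ x - ψ y|) ^ 2)
              * KK k (dist x y)))
        + (∫⁻ x, ∫⁻ y, (U.indicator 1 x * (U'ᶜ).indicator 1 y) *
            (ENNReal.ofReal |w x - w y| * ENNReal.ofReal |ψ x| * KK k (dist x y)))
        + (∫⁻ x, ∫⁻ y, (U.indicator 1 y * (U'ᶜ).indicator 1 x) *
            (ENNReal.ofReal |w y - w x| * ENNReal.ofReal |ψ y| * KK k (dist y x))) :=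
        step _ _ _ mG1 mG2 mG3
    _ < ⊤ := by
        refine ENNReal.add_lt_top.2 ⟨ENNReal.add_lt_top.2 ⟨?_, ?_⟩, ?_⟩
        · rw [double_indicator_eq hU'm hU'm]
          have inner : ∀ x, (∫⁻ y in U',
              (((ENNReal.ofReal |w x - w y|) ^ 2 + (ENNReal.ofReal |ψ x - ψ y|) ^ 2)
                * KK k (dist x y))) =
              (∫⁻ y in U', (ENNReal.ofReal |w x - w y|) ^ 2 * KK k (dist x y))
              + ∫⁻ y in U', (ENNReal.ofReal |ψ x - ψ y|) ^ 2 * KK k (dist x y) := by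
            intro x
            rw [← lintegral_add_left (show Measurable fun y =>
                (ENNReal.ofReal |w x - w y|) ^ 2 * KK k (dist x y) from
                ((mW.pow_const 2).mul mK).comp measurable_prodMk_left)]
            exact lintegral_congr fun y => by ring
          rw [lintegral_congr inner,
            lintegral_add_left (show Measurable fun x =>
              ∫⁻ y in U', (ENNReal.ofReal |w x - w y|) ^ 2 * KK k (dist x y) from
              ((mW.pow_const 2).mul mK).lintegral_prod_right')]
          exact ENNReal.add_lt_top.2 ⟨hρw, hρψ⟩
        · rw [double_indicator_eq hUm hU'm.compl]
          exact hMAIN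
        · rw [lintegral_lintegral_swap mG3.aemeasurable,
            double_indicator_eq hUm hU'm.compl]
          exact hMAIN

end total

end JFA

theorem jForm_well_defined (N : ℕ) (k : ℝ → ℝ) (hk : KCond N k)
    (U' : Set (Euc N)) (hU'o : IsOpen U')
    (v φ : Euc N → ℝ) (hv : memVJ k U' v) (hφ : memVJ k U' φ)
    (U : Set (Euc N)) (hUo : IsOpen U) (hUb : Bornology.IsBounded U) (hUU' : U ⊆ U')
    (hdist : ∃ d > 0, ∀ x ∈ U, ∀ y : Euc N, y ∉ U' → d ≤ dist x y)
    (hφ0 : ∀ x, x ∉ U → φ x = 0) :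
    (∫⁻ x, ∫⁻ y, ENNReal.ofReal (|v x - v y| * |φ x - φ y| * k (dist x y))) < ⊤ := by
  obtain ⟨hk0, hka, -, hki, -⟩ := hk
  obtain ⟨d, hd, hdist⟩ := hdist
  rcases eq_or_ne N 0 with rfl | hN
  · have h0 : (∫⁻ x : Euc 0, ∫⁻ y : Euc 0,
        ENNReal.ofReal (|v x - v y| * |φ x - φ y| * k (dist x y))) = 0 := by
      rw [← lintegral_zero (μ := (volume : Measure (Euc 0)))]
      refine lintegral_congr fun x => ?_
      rw [← lintegral_zero (μ := (volume : Measure (Euc 0)))]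
      refine lintegral_congr fun y => ?_
      have hxy : x = y := by ext i; exact i.elim0
      rw [hxy]
      simp
    rw [h0]
    exact ENNReal.zero_lt_top
  -- main case
  obtain ⟨⟨v₁, v₂, hv12, hv1, hv2⟩, hρv⟩ := hv
  obtain ⟨⟨φ₁, φ₂, hφ12, hφ1, hφ2⟩, hρφ⟩ := hφ
  have hvm : AEMeasurable v (volume : Measure (Euc N)) := by
    rw [hv12]
    exact (hv1.aestronglyMeasurable.aemeasurable).add (hv2.aestronglyMeasurable.aemeasurable)
  have hφm : AEMeasurable φ (volume : Measure (Euc N)) := by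
    rw [hφ12]
    exact (hφ1.aestronglyMeasurable.aemeasurable).add (hφ2.aestronglyMeasurable.aemeasurable)
  set w : Euc N → ℝ := hvm.mk v with hwdef
  have hwm : Measurable w := hvm.measurable_mk
  have hwv : v =ᵐ[volume] w := hvm.ae_eq_mk
  set ψ : Euc N → ℝ := U.indicator (hφm.mk φ) with hψdef
  have hψm : Measurable ψ := (hφm.measurable_mk).indicator hUo.measurableSet
  have hφψ : φ =ᵐ[volume] ψ := by
    filter_upwards [hφm.ae_eq_mk] with x hx
    rw [hψdef]
    by_cases hxU : x ∈ U
    · rw [Set.indicator_of_mem hxU]; exact hx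
    · rw [Set.indicator_of_notMem hxU, hφ0 x hxU]
  have hψ0 : ∀ x, x ∉ U → ψ x = 0 := fun x hx => by
    rw [hψdef]; exact Set.indicator_of_notMem hx _
  have hUvol : volume U < ⊤ := hUb.measure_lt_top
  have hw12 : w =ᵐ[volume] v₁ + v₂ := hwv.symm.trans (by rw [hv12])
  have hψ12 : ψ =ᵐ[volume] φ₁ + φ₂ := hφψ.symm.trans (by rw [hφ12])
  have hρw : (∫⁻ x in U', ∫⁻ y in U',
      (ENNReal.ofReal |w x - w y|) ^ 2 * JFA.KK k (dist x y)) < ⊤ := by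
    refine lt_of_eq_of_lt ?_ hρv
    calc ∫⁻ x in U', ∫⁻ y in U', (ENNReal.ofReal |w x - w y|) ^ 2 * JFA.KK k (dist x y)
        = ∫⁻ x in U', ∫⁻ y in U', ENNReal.ofReal ((w x - w y) ^ 2 * k (dist x y)) :=
          lintegral_congr fun x => lintegral_congr fun y =>
            (JFA.ofReal_sq_eq hk0 x y _ (fun h => by rw [h, sub_self])).symm
      _ = rhoE k U' v := by
          rw [rhoE]
          refine lintegral_congr_ae ?_
          filter_upwards [ae_restrict_of_ae hwv] with x hx
          refine lintegral_congr_ae ?_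
          filter_upwards [ae_restrict_of_ae hwv] with y hy
          rw [hx, hy]
  have hρψ : (∫⁻ x in U', ∫⁻ y in U',
      (ENNReal.ofReal |ψ x - ψ y|) ^ 2 * JFA.KK k (dist x y)) < ⊤ := by
    refine lt_of_eq_of_lt ?_ hρφ
    calc ∫⁻ x in U', ∫⁻ y in U', (ENNReal.ofReal |ψ x - ψ y|) ^ 2 * JFA.KK k (dist x y)
        = ∫⁻ x in U', ∫⁻ y in U', ENNReal.ofReal ((ψ x - ψ y) ^ 2 * k (dist x y)) :=
          lintegral_congr fun x => lintegral_congr fun y =>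
            (JFA.ofReal_sq_eq hk0 x y _ (fun h => by rw [h, sub_self])).symm
      _ = rhoE k U' φ := by
          rw [rhoE]
          refine lintegral_congr_ae ?_
          filter_upwards [ae_restrict_of_ae hφψ] with x hx
          refine lintegral_congr_ae ?_
          filter_upwards [ae_restrict_of_ae hφψ] with y hy
          rw [hx, hy]
  have key := JFA.total_lt_top hN hk0 hka hki hUo.measurableSet hU'o.measurableSet hUU' hUvol
    hd hdist hwm hψm hψ0 hw12 hv1 hv2 hψ12 hφ1 hφ2 hρw hρψ
  refine lt_of_eq_of_lt ?_ key
  refine lintegral_congr_ae ?_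
  filter_upwards [hwv, hφψ] with x hx hx'
  refine lintegral_congr_ae ?_
  filter_upwards [hwv, hφψ] with y hy hy'
  rw [hx, hx', hy, hy']
  exact JFA.ofReal_prod_eq hk0 x y (w x - w y) (ψ x - ψ y) (fun h => by rw [h, sub_self])
end
end

section
/- Assume k : (0,∞) → [0,∞) satisfies condition (k). If U' ⊂ ℝ^N is open and v ∈ V^J(U'), then the positive and negative parts v⁺, v⁻ belong to V^J(U') and satisfy ρ(v⁺,U') ≤ ρ(v,U') and ρ(v⁻,U') ≤ ρ(v,U'). Moreover, if v ∈ V^J(ℝ^N), then 0 ≥ J(v⁺,v⁻) > −∞. -/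
open MeasureTheory Metric Set Filter
open scoped ENNReal RealInnerProductSpace

noncomputable section

variable {N : ℕ}

private lemma maxsub_sq_le (a b : ℝ) : (max a 0 - max b 0) ^ 2 ≤ (a - b) ^ 2 := by
  have h := abs_max_sub_max_le_abs a b 0
  calc (max a 0 - max b 0) ^ 2 = |max a 0 - max b 0| ^ 2 := (sq_abs _).symm
    _ ≤ |a - b| ^ 2 := by gcongr
    _ = (a - b) ^ 2 := sq_abs _

private lemma posneg_mul_self (a : ℝ) : max a 0 * max (-a) 0 = 0 := by
  rcases le_total a 0 with h | h
  · simp [max_eq_right h]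
  · simp [max_eq_right (neg_nonpos.2 h)]

private lemma cross_nonpos (a b : ℝ) :
    (max a 0 - max b 0) * (max (-a) 0 - max (-b) 0) ≤ 0 := by
  nlinarith [posneg_mul_self a, posneg_mul_self b,
    mul_nonneg (le_max_right a 0) (le_max_right (-b) 0),
    mul_nonneg (le_max_right b 0) (le_max_right (-a) 0)]

private lemma max_sub_maxneg (a : ℝ) : max a 0 - max (-a) 0 = a := by
  rcases le_total a 0 with h | h
  · simp [max_eq_right h, max_eq_left (neg_nonneg.2 h)]
  · simp [max_eq_left h, max_eq_right (neg_nonpos.2 h)]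

private lemma prod_abs_le (a b : ℝ) :
    |max a 0 - max b 0| * |max (-a) 0 - max (-b) 0| ≤ (a - b) ^ 2 := by
  set p := max a 0 - max b 0 with hp
  set q := max (-a) 0 - max (-b) 0 with hq
  have hpq : p * q ≤ 0 := cross_nonpos a b
  have hab : a - b = p - q := by
    rw [hp, hq]; linarith [max_sub_maxneg a, max_sub_maxneg b]
  rw [hab, ← abs_mul, abs_of_nonpos hpq]
  nlinarith [sq_nonneg p, sq_nonneg q]

theorem pos_neg_parts_in_VJ (N : ℕ) (k : ℝ → ℝ) (hk : KCond N k)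
    (U' : Set (Euc N)) (hU'o : IsOpen U') (v : Euc N → ℝ) (hv : memVJ k U' v) :
    (memVJ k U' (fun x => max (v x) 0) ∧ rhoE k U' (fun x => max (v x) 0) ≤ rhoE k U' v) ∧
    (memVJ k U' (fun x => max (-v x) 0) ∧ rhoE k U' (fun x => max (-v x) 0) ≤ rhoE k U' v) ∧
    (U' = Set.univ →
      (∫⁻ x, ∫⁻ y, ENNReal.ofReal
        (|max (v x) 0 - max (v y) 0| * |max (-v x) 0 - max (-v y) 0| * k (dist x y))) < ⊤ ∧
      jForm k (fun x => max (v x) 0) (fun x => max (-v x) 0) ≤ 0) := by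
  obtain ⟨⟨v₁, v₂, hsum, h1, h2⟩, hρ⟩ := hv
  have hknn : ∀ x y : Euc N, x ≠ y → 0 ≤ k (dist x y) :=
    fun x y h => hk.1 _ (dist_pos.2 h)
  have hvm : AEStronglyMeasurable v volume := by
    rw [hsum]; exact h1.aestronglyMeasurable.add h2.aestronglyMeasurable
  have hvx : ∀ x, v x = v₁ x + v₂ x := fun x => congrFun hsum x
  have key1 : ∀ x y : Euc N,
      ENNReal.ofReal ((max (v x) 0 - max (v y) 0) ^ 2 * k (dist x y)) ≤
        ENNReal.ofReal ((v x - v y) ^ 2 * k (dist x y)) := by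
    intro x y
    by_cases hxy : x = y
    · simp [hxy]
    · exact ENNReal.ofReal_le_ofReal
        (mul_le_mul_of_nonneg_right (maxsub_sq_le _ _) (hknn x y hxy))
  have key2 : ∀ x y : Euc N,
      ENNReal.ofReal ((max (-v x) 0 - max (-v y) 0) ^ 2 * k (dist x y)) ≤
        ENNReal.ofReal ((v x - v y) ^ 2 * k (dist x y)) := by
    intro x y
    by_cases hxy : x = y
    · simp [hxy]
    · refine ENNReal.ofReal_le_ofReal
        (mul_le_mul_of_nonneg_right ?_ (hknn x y hxy))
      have he : (-v x - -v y) ^ 2 = (v x - v y) ^ 2 := by ring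
      linarith [maxsub_sq_le (-v x) (-v y), he.symm.le]
  have hρ1 : rhoE k U' (fun x => max (v x) 0) ≤ rhoE k U' v :=
    lintegral_mono fun x => lintegral_mono fun y => key1 x y
  have hρ2 : rhoE k U' (fun x => max (-v x) 0) ≤ rhoE k U' v :=
    lintegral_mono fun x => lintegral_mono fun y => key2 x y
  have mem1 : memVJ k U' (fun x => max (v x) 0) := by
    refine ⟨⟨fun x => max (v x) 0 - max (v₂ x) 0, fun x => max (v₂ x) 0, ?_, ?_, ?_⟩,
      lt_of_le_of_lt hρ1 hρ⟩
    · funext x; simp only [Pi.add_apply]; ring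
    · refine MemLp.of_le h1
        ((hvm.sup aestronglyMeasurable_const).sub
          (h2.aestronglyMeasurable.sup aestronglyMeasurable_const))
        (Filter.Eventually.of_forall fun x => ?_)
      simp only [Real.norm_eq_abs]
      calc |max (v x) 0 - max (v₂ x) 0| ≤ |v x - v₂ x| := abs_max_sub_max_le_abs _ _ 0
        _ = |v₁ x| := by rw [hvx x, add_sub_cancel_right]
    · refine MemLp.of_le h2 (h2.aestronglyMeasurable.sup aestronglyMeasurable_const)
        (Filter.Eventually.of_forall fun x => ?_)
      simp only [Real.norm_eq_abs]
      simpa using abs_max_sub_max_le_abs (v₂ x) 0 0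
  have mem2 : memVJ k U' (fun x => max (-v x) 0) := by
    refine ⟨⟨fun x => max (-v x) 0 - max (-v₂ x) 0, fun x => max (-v₂ x) 0, ?_, ?_, ?_⟩,
      lt_of_le_of_lt hρ2 hρ⟩
    · funext x; simp only [Pi.add_apply]; ring
    · refine MemLp.of_le h1
        ((hvm.neg.sup aestronglyMeasurable_const).sub
          (h2.aestronglyMeasurable.neg.sup aestronglyMeasurable_const))
        (Filter.Eventually.of_forall fun x => ?_)
      simp only [Real.norm_eq_abs]
      have hd : -v x - -v₂ x = -v₁ x := by rw [hvx x]; ring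
      calc |max (-v x) 0 - max (-v₂ x) 0| ≤ |-v x - -v₂ x| := abs_max_sub_max_le_abs _ _ 0
        _ = |v₁ x| := by rw [hd, abs_neg]
    · refine MemLp.of_le h2 (h2.aestronglyMeasurable.neg.sup aestronglyMeasurable_const)
        (Filter.Eventually.of_forall fun x => ?_)
      simp only [Real.norm_eq_abs]
      have := abs_max_sub_max_le_abs (-v₂ x) 0 0
      simpa [abs_neg] using this
  refine ⟨⟨mem1, hρ1⟩, ⟨mem2, hρ2⟩, fun hU => ?_⟩
  subst hU
  constructor
  · have hle : (∫⁻ x, ∫⁻ y, ENNReal.ofReal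
        (|max (v x) 0 - max (v y) 0| * |max (-v x) 0 - max (-v y) 0| * k (dist x y))) ≤
        rhoE k Set.univ v := by
      rw [rhoE]
      simp only [Measure.restrict_univ]
      refine lintegral_mono fun x => lintegral_mono fun y => ?_
      by_cases hxy : x = y
      · simp [hxy]
      · exact ENNReal.ofReal_le_ofReal
          (mul_le_mul_of_nonneg_right (prod_abs_le _ _) (hknn x y hxy))
    exact lt_of_le_of_lt hle hρ
  · simp only [jForm]
    have hI : (∫ x : Euc N, ∫ y : Euc N,
        (max (v x) 0 - max (v y) 0) * (max (-v x) 0 - max (-v y) 0) * k (dist x y)) ≤ 0 := by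
      refine integral_nonpos fun x => integral_nonpos fun y => ?_
      by_cases hxy : x = y
      · simp [hxy]
      · exact mul_nonpos_iff.mpr (Or.inr ⟨cross_nonpos _ _, hknn x y hxy⟩)
    linarith
end
end

section
/- Let H ⊂ ℝ^N be an open affine half-space with reflection Q_H across ∂H, and let k : (0,∞) → [0,∞) be decreasing and strictly decreasing on (0,r₀) for some r₀ > 0. Then: (i) k(|x−y|) ≥ k(|x−Q_H(y)|) for all x, y ∈ H; and (ii) for every x ∈ H and every r with 0 < r < min{r₀, dist(x,∂H)}, one has ess inf_{y ∈ B_r(x)} ( k(|x−y|) − k(|x−Q_H(y)|) ) > 0. -/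
open MeasureTheory Metric Set Filter
open scoped ENNReal RealInnerProductSpace

noncomputable section

variable {N : ℕ}

lemma refl_dist_sq {N : ℕ} (e : Euc N) (he : ‖e‖ = 1) (l : ℝ) (x y : Euc N) :
    dist x (reflSp e l y) ^ 2
      = dist x y ^ 2 + 4 * (⟪x, e⟫ - l) * (⟪y, e⟫ - l) := by
  have h1 : x - reflSp e l y = (x - y) - (2 * (l - ⟪y, e⟫)) • e := by
    simp [reflSp]; abel
  rw [dist_eq_norm, dist_eq_norm, h1, norm_sub_sq_real, real_inner_smul_right,
    norm_smul, inner_sub_left, mul_pow, Real.norm_eq_abs, sq_abs]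
  simp [he]
  ring

theorem kernel_reflection_inequalities (N : ℕ) (e : Euc N) (he : ‖e‖ = 1) (l : ℝ)
    (k : ℝ → ℝ) (hknn : ∀ r : ℝ, 0 < r → 0 ≤ k r) (hanti : AntitoneOn k (Set.Ioi 0))
    (r₀ : ℝ) (hr₀ : 0 < r₀) (hstrict : StrictAntiOn k (Set.Ioo 0 r₀)) :
    (∀ x ∈ halfSp e l, ∀ y ∈ halfSp e l, x ≠ y →
      k (dist x (reflSp e l y)) ≤ k (dist x y)) ∧
    (∀ x ∈ halfSp e l, ∀ r : ℝ, 0 < r →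
      r < min r₀ (Metric.infDist x {z : Euc N | ⟪z, e⟫ = l}) →
      ∃ m > 0, ∀ᵐ y ∂(volume.restrict (Metric.ball x r)),
        m ≤ k (dist x y) - k (dist x (reflSp e l y))) := by
  constructor
  · intro x hx y hy hxy
    have hs : 0 < dist x y := dist_pos.2 hxy
    have hsq := refl_dist_sq e he l x y
    have ha : 0 < ⟪x, e⟫ - l := sub_pos.2 hx
    have hb : 0 < ⟪y, e⟫ - l := sub_pos.2 hy
    have hd : dist x y ≤ dist x (reflSp e l y) := by
      nlinarith [dist_nonneg (x := x) (y := reflSp e l y), mul_pos ha hb]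
    exact hanti hs (lt_of_lt_of_le hs hd)  hd
  · intro x hx r hr hrlt
    set a : ℝ := ⟪x, e⟫ - l with ha_def
    have ha : 0 < a := sub_pos.2 hx
    -- infDist ≤ a
    have hzmem : (x + (l - ⟪x, e⟫) • e) ∈ {z : Euc N | ⟪z, e⟫ = l} := by
      show ⟪x + (l - ⟪x, e⟫) • e, e⟫ = l
      rw [inner_add_left, real_inner_smul_left, real_inner_self_eq_norm_sq, he]
      ring
    have hdza : dist x (x + (l - ⟪x, e⟫) • e) = a := by
      rw [dist_self_add_right, norm_smul, Real.norm_eq_abs, he, mul_one,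
        abs_of_nonpos (by linarith), ha_def]
      ring
    have hinf : Metric.infDist x {z : Euc N | ⟪z, e⟫ = l} ≤ a := by
      calc Metric.infDist x {z : Euc N | ⟪z, e⟫ = l}
          ≤ dist x (x + (l - ⟪x, e⟫) • e) := Metric.infDist_le_dist_of_mem hzmem
        _ = a := hdza
    have hra : r < a := lt_of_lt_of_le (lt_of_lt_of_le hrlt (min_le_right _ _)) hinf
    have hrr₀ : r < r₀ := lt_of_lt_of_le hrlt (min_le_left _ _)
    set ρ : ℝ := min (2 * a - r) ((r + r₀) / 2) with hρ_def
    have hrρ : r < ρ := lt_min (by linarith) (by linarith)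
    have hρr₀ : ρ < r₀ := lt_of_le_of_lt (min_le_right _ _) (by linarith)
    have hρpos : 0 < ρ := hr.trans hrρ
    have hm : 0 < k r - k ρ := by
      have := hstrict (Set.mem_Ioo.2 ⟨hr, hrr₀⟩) (Set.mem_Ioo.2 ⟨hρpos, hρr₀⟩) hrρ
      linarith
    refine ⟨k r - k ρ, hm, ?_⟩
    haveI : Nontrivial (Euc N) := ⟨⟨e, 0, fun h => by simp [h] at he⟩⟩
    have hne : ∀ᵐ y ∂(volume.restrict (Metric.ball x r)), y ≠ x := by
      refine ae_restrict_of_ae ?_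
      have h0 : (volume : Measure (Euc N)) {x} = 0 := measure_singleton x
      exact ae_iff.2 (by simpa using h0)
    filter_upwards [hne, ae_restrict_mem measurableSet_ball] with y hy hymem
    have hs : 0 < dist x y := dist_pos.2 (Ne.symm hy)
    have hsr : dist x y < r := by rw [dist_comm]; exact mem_ball.mp hymem
    -- b ≥ a - s
    have hb : a - dist x y ≤ ⟪y, e⟫ - l := by
      have h1 : ⟪x - y, e⟫ ≤ ‖x - y‖ * ‖e‖ := real_inner_le_norm _ _
      rw [inner_sub_left, he, mul_one, ← dist_eq_norm] at h1
      simp only [ha_def]; linarith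
    have hsq := refl_dist_sq e he l x y
    have hdlb : ρ ≤ dist x (reflSp e l y) := by
      have h2a : 2 * a - dist x y ≤ dist x (reflSp e l y) := by
        nlinarith [dist_nonneg (x := x) (y := reflSp e l y), hs.le, hb, ha]
      calc ρ ≤ 2 * a - r := min_le_left _ _
        _ ≤ 2 * a - dist x y := by linarith
        _ ≤ _ := h2a
    have h1 : k r ≤ k (dist x y) := hanti hs hr hsr.le
    have h2 : k (dist x (reflSp e l y)) ≤ k ρ :=
      hanti hρpos (hρpos.trans_le hdlb) hdlb
    linarith
end
end

section
/- Assume k : (0,∞) → [0,∞) satisfies condition (k), let Ω ⊂ ℝ^N be an open radial set, and let f : [0,∞) × ℝ → ℝ satisfy (F1). Let u ∈ D^J(Ω) be a bounded weak solution of Iu = f(|x|,u) in Ω, u ≡ 0 on ℝ^N∖Ω, with u(x) → 0 as |x| → ∞. Then for every open affine half-space H with 0 ∈ ∂H, the function v := u∘Q_H − u is an antisymmetric supersolution of Iv = c(x)v in U := Ω∩H, v ≡ 0 on H∖U, where c ∈ L^∞(U) is given by c(x) = (f(|x|,u(Q_H(x))) − f(|x|,u(x)))/v(x) if v(x) ≠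 0 and c(x) = 0 if v(x) = 0. -/
open MeasureTheory Metric Set Filter
open scoped ENNReal RealInnerProductSpace

noncomputable section

variable {N : ℕ}

/-! ### Auxiliary lemmas -/

section ReflAux
variable {N : ℕ} {e : Euc N}

lemma inner_ee (he : ‖e‖ = 1) : ⟪e, e⟫ = 1 := by
  rw [real_inner_self_eq_norm_sq, he]; norm_num

lemma inner_reflSp (he : ‖e‖ = 1) (x : Euc N) : ⟪reflSp e 0 x, e⟫ = -⟪x, e⟫ := by
  rw [reflSp, inner_add_left, real_inner_smul_left, inner_ee he]; ring

lemma reflSp_invol (he : ‖e‖ = 1) (x : Euc N) : reflSp e 0 (reflSp e 0 x) = x := by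
  have h := inner_reflSp he x
  simp only [reflSp] at h ⊢
  rw [h]
  module

lemma norm_reflSp (he : ‖e‖ = 1) (x : Euc N) : ‖reflSp e 0 x‖ = ‖x‖ := by
  have : ‖reflSp e 0 x‖ ^ 2 = ‖x‖ ^ 2 := by
    rw [← real_inner_self_eq_norm_sq, ← real_inner_self_eq_norm_sq, reflSp,
      inner_add_left, inner_add_right, inner_add_right, real_inner_smul_left,
      real_inner_smul_left, real_inner_smul_right, real_inner_smul_right, inner_ee he,
      real_inner_comm x e]
    ring
  have h1 := norm_nonneg (reflSp e 0 x); have h2 := norm_nonneg x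
  nlinarith

/-- The reflection as a linear isometry equivalence. -/
def reflLIE (e : Euc N) (he : ‖e‖ = 1) : Euc N ≃ₗᵢ[ℝ] Euc N where
  toFun := reflSp e 0
  invFun := reflSp e 0
  map_add' x y := by simp only [reflSp, inner_add_left]; module
  map_smul' c x := by simp only [reflSp, real_inner_smul_left, RingHom.id_apply]; module
  left_inv := reflSp_invol he
  right_inv := reflSp_invol he
  norm_map' := norm_reflSp he

lemma measurePreserving_reflSp (he : ‖e‖ = 1) :
    MeasurePreserving (reflSp e 0) (volume : Measure (Euc N)) volume :=
  (reflLIE e he).measurePreserving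

lemma continuous_reflSp (he : ‖e‖ = 1) : Continuous (reflSp e 0 : Euc N → Euc N) :=
  (reflLIE e he).continuous

/-- reflection as a MeasurableEquiv -/
def reflME (e : Euc N) (he : ‖e‖ = 1) : Euc N ≃ᵐ Euc N :=
  (reflLIE e he).toHomeomorph.toMeasurableEquiv

lemma map_reflSp (he : ‖e‖ = 1) :
    Measure.map (reflSp e 0) (volume : Measure (Euc N)) = volume :=
  (measurePreserving_reflSp he).map_eq

lemma map_reflME (he : ‖e‖ = 1) :
    Measure.map (reflME e he) (volume : Measure (Euc N)) = volume :=
  (measurePreserving_reflSp he).map_eq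

lemma dist_reflSp (he : ‖e‖ = 1) (x y : Euc N) :
    dist (reflSp e 0 x) (reflSp e 0 y) = dist x y :=
  (reflLIE e he).isometry.dist_eq x y

lemma ae_reflSp_iff (he : ‖e‖ = 1) {P : Euc N → Prop} :
    (∀ᵐ x : Euc N, P (reflSp e 0 x)) ↔ ∀ᵐ x : Euc N, P x := by
  constructor
  · intro h
    have h2 := (measurePreserving_reflSp (N := N) he).quasiMeasurePreserving.ae h
    filter_upwards [h2] with x hx
    rwa [reflSp_invol he] at hx
  · intro h
    exact (measurePreserving_reflSp he).quasiMeasurePreserving.ae h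

lemma surjective_reflSp (he : ‖e‖ = 1) : Function.Surjective (reflSp e 0 : Euc N → Euc N) :=
  fun x => ⟨reflSp e 0 x, reflSp_invol he x⟩

end ReflAux
section KtAux

/-- truncated kernel -/
def kt (k : ℝ → ℝ) (r : ℝ) : ℝ := if 0 < r then k r else 0

lemma kt_nonneg {k : ℝ → ℝ} (hk0 : ∀ r : ℝ, 0 < r → 0 ≤ k r) (r : ℝ) : 0 ≤ kt k r := by
  unfold kt; split_ifs with h
  · exact hk0 r h
  · exact le_refl 0

lemma kt_of_pos {k : ℝ → ℝ} {r : ℝ} (h : 0 < r) : kt k r = k r := if_pos h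

lemma measurable_kt {k : ℝ → ℝ} (hk : AntitoneOn k (Set.Ioi 0)) : Measurable (kt k) := by
  set g : ℕ → ℝ → ℝ := fun n r => k (max r (1 / (n + 1))) with hg
  have hganti : ∀ n, Antitone (g n) := by
    intro n a b hab
    have hp : (0:ℝ) < 1 / (n + 1) := by positivity
    exact hk (lt_of_lt_of_le hp (le_max_right _ _) : (0:ℝ) < _)
      (lt_of_lt_of_le hp (le_max_right _ _)) (max_le_max hab le_rfl)
  have hgm : ∀ n, Measurable (Set.indicator (Set.Ioi (0:ℝ)) (g n)) :=
    fun n => ((hganti n).measurable).indicator measurableSet_Ioi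
  apply measurable_of_tendsto_metrizable hgm
  rw [tendsto_pi_nhds]
  intro r
  rcases le_or_gt r 0 with h | h
  · have : ∀ n, Set.indicator (Set.Ioi (0:ℝ)) (g n) r = kt k r := by
      intro n
      rw [Set.indicator_of_notMem (by simpa using h), kt, if_neg (not_lt.2 h)]
    simp only [this]
    exact tendsto_const_nhds
  · obtain ⟨n₀, hn₀⟩ := exists_nat_one_div_lt h
    apply tendsto_const_nhds.congr'
    filter_upwards [eventually_ge_atTop n₀] with n hn
    have h1 : (1:ℝ) / (n + 1) ≤ r := by
      refine le_trans ?_ hn₀.le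
      apply one_div_le_one_div_of_le (by positivity)
      exact_mod_cast Nat.succ_le_succ hn
    rw [Set.indicator_of_mem (by simpa using h), hg]
    simp only [max_eq_left h1, kt, if_pos h]

variable {N : ℕ}

theorem lintegral_norm_euc [Nontrivial (Euc N)] (g : ℝ → ℝ≥0∞) (hg : Measurable g) :
    ∫⁻ z : Euc N, g ‖z‖ =
      (volume : Measure (Euc N)).toSphere univ *
        ∫⁻ r in Ioi (0:ℝ), ENNReal.ofReal (r ^ (N - 1)) * g r := by
  have hdim : Module.finrank ℝ (Euc N) = N := finrank_euclideanSpace_fin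
  calc ∫⁻ z : Euc N, g ‖z‖
      = ∫⁻ z in ({0}ᶜ : Set (Euc N)), g ‖z‖ := by
        rw [restrict_compl_singleton]
    _ = ∫⁻ x : ({0}ᶜ : Set (Euc N)), g ‖(x : Euc N)‖ ∂((volume : Measure (Euc N)).comap Subtype.val) :=
        (lintegral_subtype_comap (measurableSet_singleton _).compl (fun z => g ‖z‖)).symm
    _ = ∫⁻ x : ({0}ᶜ : Set (Euc N)), ((g ∘ Subtype.val) ∘ Prod.snd) (homeomorphUnitSphereProd (Euc N) x)
          ∂((volume : Measure (Euc N)).comap Subtype.val) := by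
        refine lintegral_congr fun x => ?_
        simp [homeomorphUnitSphereProd, homeomorphSphereProd]
    _ = ∫⁻ p : sphere (0:Euc N) 1 × Ioi (0:ℝ), ((g ∘ Subtype.val) ∘ Prod.snd) p
          ∂((volume : Measure (Euc N)).toSphere.prod (.volumeIoiPow (Module.finrank ℝ (Euc N) - 1))) :=
        (volume : Measure (Euc N)).measurePreserving_homeomorphUnitSphereProd.lintegral_comp
          ((hg.comp measurable_subtype_coe).comp measurable_snd)
    _ = (volume : Measure (Euc N)).toSphere univ * ∫⁻ r : Ioi (0:ℝ), g r ∂(Measure.volumeIoiPow (N - 1)) := by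
        rw [hdim, lintegral_prod _ ((hg.comp measurable_subtype_coe).comp measurable_snd).aemeasurable]
        simp [lintegral_const, mul_comm]
    _ = (volume : Measure (Euc N)).toSphere univ *
          ∫⁻ r : Ioi (0:ℝ), (fun s : ℝ => ENNReal.ofReal (s ^ (N - 1)) * g s) ↑r
            ∂(Measure.comap Subtype.val (volume : Measure ℝ)) := by
        rw [Measure.volumeIoiPow,
          lintegral_withDensity_eq_lintegral_mul _
            (by fun_prop : Measurable fun r : Ioi (0:ℝ) => ENNReal.ofReal ((r:ℝ) ^ (N - 1)))
            (g := fun r : Ioi (0:ℝ) => g ↑r) (hg.comp measurable_subtype_coe)]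
        rfl
    _ = (volume : Measure (Euc N)).toSphere univ * ∫⁻ r in Ioi (0:ℝ), ENNReal.ofReal (r ^ (N - 1)) * g r := by
        rw [lintegral_subtype_comap measurableSet_Ioi
            (fun r : ℝ => ENNReal.ofReal (r ^ (N - 1)) * g r)]

theorem kint_lt_top [Nontrivial (Euc N)] {k : ℝ → ℝ} (hk : KCond N k) :
    ∫⁻ z : Euc N, ENNReal.ofReal (min 1 (‖z‖ ^ 2) * kt k ‖z‖) < ⊤ := by
  have hktm : Measurable (kt k) := measurable_kt hk.2.1
  have hgm : Measurable (fun r : ℝ => ENNReal.ofReal (min 1 (r ^ 2) * kt k r)) := by fun_prop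
  rw [lintegral_norm_euc _ hgm]
  refine ENNReal.mul_lt_top (measure_lt_top _ _) ?_
  have hint := hk.2.2.2.1
  have hfin : ∫⁻ r in Ioi (0:ℝ), ENNReal.ofReal (min 1 (r ^ 2) * k r * r ^ (N - 1)) < ⊤ := by
    refine lt_of_le_of_lt ?_ hint.2
    apply lintegral_mono
    intro r
    exact Real.ofReal_le_enorm _
  refine lt_of_le_of_lt (le_of_eq ?_) hfin
  apply setLIntegral_congr_fun measurableSet_Ioi
  intro r hr
  dsimp only
  rw [kt_of_pos hr, ← ENNReal.ofReal_mul (pow_nonneg (le_of_lt hr) _)]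
  congr 1
  ring

end KtAux
section EEAux
variable {N : ℕ} {k : ℝ → ℝ} {e : Euc N}

lemma mul_k_eq_mul_kt (k : ℝ → ℝ) {x y : Euc N} {a : ℝ} (h : x = y → a = 0) :
    a * k (dist x y) = a * kt k (dist x y) := by
  rcases eq_or_ne x y with rfl | hxy
  · rw [h rfl, zero_mul, zero_mul]
  · rw [kt_of_pos (dist_pos.2 hxy)]

/-- Energy as integral over the product space, with truncated kernel. -/
def EE (k : ℝ → ℝ) (v : Euc N → ℝ) : ℝ≥0∞ :=
  ∫⁻ p : Euc N × Euc N, ENNReal.ofReal ((v p.1 - v p.2) ^ 2 * kt k (dist p.1 p.2))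
    ∂((volume : Measure (Euc N)).prod volume)

lemma aemeasurable_diff_pair {v : Euc N → ℝ} (hv : AEMeasurable v (volume : Measure (Euc N))) :
    AEMeasurable (fun p : Euc N × Euc N => v p.1 - v p.2)
      ((volume : Measure (Euc N)).prod volume) :=
  (hv.comp_quasiMeasurePreserving Measure.quasiMeasurePreserving_fst).sub
    (hv.comp_quasiMeasurePreserving Measure.quasiMeasurePreserving_snd)

lemma measurable_kt_dist (hkm : Measurable (kt k)) :
    Measurable (fun p : Euc N × Euc N => kt k (dist p.1 p.2)) :=
  hkm.comp measurable_dist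

lemma aemeasurable_sq_pair (hk : AntitoneOn k (Set.Ioi 0)) {v : Euc N → ℝ}
    (hv : AEMeasurable v (volume : Measure (Euc N))) :
    AEMeasurable (fun p : Euc N × Euc N => (v p.1 - v p.2) ^ 2 * kt k (dist p.1 p.2))
      ((volume : Measure (Euc N)).prod volume) :=
  ((aemeasurable_diff_pair hv).pow_const 2).mul (measurable_kt_dist (measurable_kt hk)).aemeasurable

lemma jEnergy_eq_EE (hk : AntitoneOn k (Set.Ioi 0)) {v : Euc N → ℝ}
    (hv : AEMeasurable v (volume : Measure (Euc N))) :
    jEnergy k v = (1 / 2 : ℝ≥0∞) * EE k v := by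
  unfold jEnergy EE
  congr 1
  calc ∫⁻ x, ∫⁻ y, ENNReal.ofReal ((v x - v y) ^ 2 * k (dist x y))
      = ∫⁻ x, ∫⁻ y, ENNReal.ofReal ((v x - v y) ^ 2 * kt k (dist x y)) := by
        refine lintegral_congr fun x => lintegral_congr fun y => ?_
        rw [mul_k_eq_mul_kt k (fun h => by rw [h]; ring)]
    _ = ∫⁻ p : Euc N × Euc N, ENNReal.ofReal ((v p.1 - v p.2) ^ 2 * kt k (dist p.1 p.2))
          ∂((volume : Measure (Euc N)).prod volume) :=
        lintegral_lintegral ((aemeasurable_sq_pair hk hv).ennreal_ofReal)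

lemma EE_lt_top (hk : AntitoneOn k (Set.Ioi 0)) {v : Euc N → ℝ}
    (hv : AEMeasurable v (volume : Measure (Euc N))) (h : jEnergy k v < ⊤) :
    EE k v < ⊤ := by
  rw [jEnergy_eq_EE hk hv] at h
  by_contra htop
  rw [not_lt, top_le_iff] at htop
  rw [htop, ENNReal.mul_top (by norm_num)] at h
  exact (lt_irrefl _ h).elim

lemma EE_comp_refl (he : ‖e‖ = 1) (v : Euc N → ℝ) :
    EE k (fun x => v (reflSp e 0 x)) = EE k v := by
  have hQQ : Measure.map (⇑((reflME e he).prodCongr (reflME e he)))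
      ((volume : Measure (Euc N)).prod volume) = (volume : Measure (Euc N)).prod volume :=
    ((measurePreserving_reflSp he).prod (measurePreserving_reflSp he)).map_eq
  unfold EE
  conv_rhs => rw [← hQQ]
  rw [lintegral_map_equiv]
  refine lintegral_congr fun p => ?_
  have h1 : ((reflME e he).prodCongr (reflME e he)) p = (reflSp e 0 p.1, reflSp e 0 p.2) := rfl
  rw [h1]
  simp only [dist_reflSp he]

lemma EE_sub_le (hk : AntitoneOn k (Set.Ioi 0)) (hk0 : ∀ r : ℝ, 0 < r → 0 ≤ k r)
    {v w : Euc N → ℝ} (hv : AEMeasurable v (volume : Measure (Euc N)))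
    (hw : AEMeasurable w (volume : Measure (Euc N))) :
    EE k (fun x => v x - w x) ≤ 2 * EE k v + 2 * EE k w := by
  unfold EE
  have hb : ∀ p : Euc N × Euc N,
      ENNReal.ofReal (((v p.1 - w p.1) - (v p.2 - w p.2)) ^ 2 * kt k (dist p.1 p.2)) ≤
        ENNReal.ofReal (2 * ((v p.1 - v p.2) ^ 2 * kt k (dist p.1 p.2))) +
          ENNReal.ofReal (2 * ((w p.1 - w p.2) ^ 2 * kt k (dist p.1 p.2))) := by
    intro p
    have hkt : 0 ≤ kt k (dist p.1 p.2) := kt_nonneg hk0 _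
    have ha : (0:ℝ) ≤ 2 * ((v p.1 - v p.2) ^ 2 * kt k (dist p.1 p.2)) := by
      have := mul_nonneg (sq_nonneg (v p.1 - v p.2)) hkt; linarith
    have hb' : (0:ℝ) ≤ 2 * ((w p.1 - w p.2) ^ 2 * kt k (dist p.1 p.2)) := by
      have := mul_nonneg (sq_nonneg (w p.1 - w p.2)) hkt; linarith
    rw [← ENNReal.ofReal_add ha hb']
    apply ENNReal.ofReal_le_ofReal
    nlinarith [mul_nonneg (sq_nonneg ((v p.1 - v p.2) + (w p.1 - w p.2))) hkt]
  refine le_trans (lintegral_mono hb) ?_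
  rw [lintegral_add_left' (((aemeasurable_sq_pair hk hv).const_mul 2).ennreal_ofReal)]
  gcongr
  · refine le_of_eq ?_
    calc ∫⁻ p : Euc N × Euc N, ENNReal.ofReal (2 * ((v p.1 - v p.2) ^ 2 * kt k (dist p.1 p.2)))
          ∂((volume : Measure (Euc N)).prod volume)
        = ∫⁻ p : Euc N × Euc N, 2 * ENNReal.ofReal ((v p.1 - v p.2) ^ 2 * kt k (dist p.1 p.2))
          ∂((volume : Measure (Euc N)).prod volume) := by
          refine lintegral_congr fun p => ?_
          rw [ENNReal.ofReal_mul (by norm_num : (0:ℝ) ≤ 2)]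
          norm_num
      _ = 2 * EE k v := lintegral_const_mul' _ _ (by norm_num)
  · refine le_of_eq ?_
    calc ∫⁻ p : Euc N × Euc N, ENNReal.ofReal (2 * ((w p.1 - w p.2) ^ 2 * kt k (dist p.1 p.2)))
          ∂((volume : Measure (Euc N)).prod volume)
        = ∫⁻ p : Euc N × Euc N, 2 * ENNReal.ofReal ((w p.1 - w p.2) ^ 2 * kt k (dist p.1 p.2))
          ∂((volume : Measure (Euc N)).prod volume) := by
          refine lintegral_congr fun p => ?_
          rw [ENNReal.ofReal_mul (by norm_num : (0:ℝ) ≤ 2)]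
          norm_num
      _ = 2 * EE k w := lintegral_const_mul' _ _ (by norm_num)

end EEAux
section FormAux
variable {N : ℕ} {k : ℝ → ℝ} {e : Euc N}

lemma aemeasurable_PF (hk : AntitoneOn k (Set.Ioi 0)) {v w : Euc N → ℝ}
    (hv : AEMeasurable v (volume : Measure (Euc N)))
    (hw : AEMeasurable w (volume : Measure (Euc N))) :
    AEMeasurable (fun p : Euc N × Euc N =>
        (v p.1 - v p.2) * (w p.1 - w p.2) * kt k (dist p.1 p.2))
      ((volume : Measure (Euc N)).prod volume) :=
  ((aemeasurable_diff_pair hv).mul (aemeasurable_diff_pair hw)).mul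
    (measurable_kt_dist (measurable_kt hk)).aemeasurable

/-- key integrability of the bilinear integrand -/
lemma integrable_PF (hk : AntitoneOn k (Set.Ioi 0)) (hk0 : ∀ r : ℝ, 0 < r → 0 ≤ k r)
    {v w : Euc N → ℝ}
    (hv : AEMeasurable v (volume : Measure (Euc N)))
    (hw : AEMeasurable w (volume : Measure (Euc N)))
    (hev : EE k v < ⊤) (hew : EE k w < ⊤) :
    Integrable (fun p : Euc N × Euc N =>
        (v p.1 - v p.2) * (w p.1 - w p.2) * kt k (dist p.1 p.2))
      ((volume : Measure (Euc N)).prod volume) := by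
  refine ⟨(aemeasurable_PF hk hv hw).aestronglyMeasurable, ?_⟩
  rw [hasFiniteIntegral_iff_norm]
  have hb : ∀ p : Euc N × Euc N,
      ENNReal.ofReal ‖(v p.1 - v p.2) * (w p.1 - w p.2) * kt k (dist p.1 p.2)‖ ≤
        ENNReal.ofReal ((v p.1 - v p.2) ^ 2 * kt k (dist p.1 p.2)) +
          ENNReal.ofReal ((w p.1 - w p.2) ^ 2 * kt k (dist p.1 p.2)) := by
    intro p
    have hkt : 0 ≤ kt k (dist p.1 p.2) := kt_nonneg hk0 _
    rw [← ENNReal.ofReal_add (mul_nonneg (sq_nonneg _) hkt) (mul_nonneg (sq_nonneg _) hkt),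
      Real.norm_eq_abs]
    apply ENNReal.ofReal_le_ofReal
    rw [abs_mul, abs_mul, abs_of_nonneg hkt]
    nlinarith [mul_nonneg (sq_nonneg (|v p.1 - v p.2| - |w p.1 - w p.2|)) hkt,
      abs_nonneg (v p.1 - v p.2), abs_nonneg (w p.1 - w p.2),
      sq_abs (v p.1 - v p.2), sq_abs (w p.1 - w p.2)]
  refine lt_of_le_of_lt (lintegral_mono hb) ?_
  rw [lintegral_add_left' ((aemeasurable_sq_pair hk hv).ennreal_ofReal)]
  exact ENNReal.add_lt_top.2 ⟨hev, hew⟩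

lemma integral_comp_refl (he : ‖e‖ = 1) (g : Euc N → ℝ) :
    ∫ x, g x = ∫ x, g (reflSp e 0 x) := by
  conv_lhs => rw [← map_reflME he]
  exact MeasureTheory.integral_map_equiv (reflME e he) g

lemma intint_comp_refl (he : ‖e‖ = 1) (F : Euc N → Euc N → ℝ) :
    ∫ x, ∫ y, F x y = ∫ x, ∫ y, F (reflSp e 0 x) (reflSp e 0 y) := by
  calc ∫ x, ∫ y, F x y = ∫ x, ∫ y, F (reflSp e 0 x) y :=
        integral_comp_refl he (fun x => ∫ y, F x y)
    _ = ∫ x, ∫ y, F (reflSp e 0 x) (reflSp e 0 y) :=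
        integral_congr_ae (Filter.Eventually.of_forall fun x =>
          integral_comp_refl he (fun y => F (reflSp e 0 x) y))

lemma jForm_eq_kt (k : ℝ → ℝ) (v w : Euc N → ℝ) :
    jForm k v w = (1 / 2 : ℝ) * ∫ x, ∫ y, (v x - v y) * (w x - w y) * kt k (dist x y) := by
  unfold jForm
  congr 1
  refine integral_congr_ae (Filter.Eventually.of_forall fun x => ?_)
  refine integral_congr_ae (Filter.Eventually.of_forall fun y => ?_)
  exact mul_k_eq_mul_kt k (fun h => by rw [h]; ring)

lemma jForm_eq_prod {v w : Euc N → ℝ}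
    (hint : Integrable (fun p : Euc N × Euc N =>
        (v p.1 - v p.2) * (w p.1 - w p.2) * kt k (dist p.1 p.2))
      ((volume : Measure (Euc N)).prod volume)) :
    jForm k v w = (1 / 2 : ℝ) *
      ∫ p : Euc N × Euc N, (v p.1 - v p.2) * (w p.1 - w p.2) * kt k (dist p.1 p.2)
        ∂((volume : Measure (Euc N)).prod volume) := by
  rw [jForm_eq_kt]
  congr 1
  exact MeasureTheory.integral_integral hint

lemma jForm_comp_refl (he : ‖e‖ = 1) (k : ℝ → ℝ) (v w : Euc N → ℝ) :
    jForm k (fun x => v (reflSp e 0 x)) w = jForm k v (fun x => w (reflSp e 0 x)) := by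
  rw [jForm_eq_kt, jForm_eq_kt]
  congr 1
  calc ∫ x, ∫ y, (v (reflSp e 0 x) - v (reflSp e 0 y)) * (w x - w y) * kt k (dist x y)
      = ∫ x, ∫ y, (v (reflSp e 0 (reflSp e 0 x)) - v (reflSp e 0 (reflSp e 0 y))) *
          (w (reflSp e 0 x) - w (reflSp e 0 y)) * kt k (dist (reflSp e 0 x) (reflSp e 0 y)) :=
        intint_comp_refl he _
    _ = ∫ x, ∫ y, (v x - v y) * (w (reflSp e 0 x) - w (reflSp e 0 y)) * kt k (dist x y) := by
        simp only [reflSp_invol he, dist_reflSp he]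

/-- splitting the form for a difference -/
lemma jForm_sub (hk : AntitoneOn k (Set.Ioi 0)) (hk0 : ∀ r : ℝ, 0 < r → 0 ≤ k r)
    {v₁ v₂ w : Euc N → ℝ}
    (hv₁ : AEMeasurable v₁ (volume : Measure (Euc N)))
    (hv₂ : AEMeasurable v₂ (volume : Measure (Euc N)))
    (hw : AEMeasurable w (volume : Measure (Euc N)))
    (he₁ : EE k v₁ < ⊤) (he₂ : EE k v₂ < ⊤) (hew : EE k w < ⊤) :
    jForm k (fun x => v₁ x - v₂ x) w = jForm k v₁ w - jForm k v₂ w := by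
  have h1 := integrable_PF hk hk0 hv₁ hw he₁ hew
  have h2 := integrable_PF hk hk0 hv₂ hw he₂ hew
  have h0 : Integrable (fun p : Euc N × Euc N =>
      ((v₁ p.1 - v₂ p.1) - (v₁ p.2 - v₂ p.2)) * (w p.1 - w p.2) * kt k (dist p.1 p.2))
      ((volume : Measure (Euc N)).prod volume) := by
    have := h1.sub h2
    refine this.congr (Filter.Eventually.of_forall fun p => ?_)
    simp only [Pi.sub_apply]
    ring
  rw [jForm_eq_prod (v := fun x => v₁ x - v₂ x) h0, jForm_eq_prod h1, jForm_eq_prod h2]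
  rw [← mul_sub, ← integral_sub h1 h2]
  congr 1
  refine integral_congr_ae (Filter.Eventually.of_forall fun p => ?_)
  ring

end FormAux
section BumpAux
variable {N : ℕ} {k : ℝ → ℝ}

lemma lintegral_shift_norm (hgm : Measurable (fun z : Euc N => ENNReal.ofReal
      (min 1 (‖z‖ ^ 2) * kt k ‖z‖))) (x : Euc N) :
    ∫⁻ y : Euc N, ENNReal.ofReal (min 1 (dist x y ^ 2) * kt k (dist x y)) =
      ∫⁻ z : Euc N, ENNReal.ofReal (min 1 (‖z‖ ^ 2) * kt k ‖z‖) := by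
  have h1 : MeasurePreserving (fun y : Euc N => x + -y) volume volume :=
    (measurePreserving_add_left volume x).comp (Measure.measurePreserving_neg volume)
  calc ∫⁻ y : Euc N, ENNReal.ofReal (min 1 (dist x y ^ 2) * kt k (dist x y))
      = ∫⁻ y : Euc N, ENNReal.ofReal (min 1 (‖x + -y‖ ^ 2) * kt k ‖x + -y‖) := by
        refine lintegral_congr fun y => ?_
        rw [dist_eq_norm, sub_eq_add_neg]
    _ = ∫⁻ z : Euc N, ENNReal.ofReal (min 1 (‖z‖ ^ 2) * kt k ‖z‖) :=
        h1.lintegral_comp hgm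

lemma EE_lt_top_of_lipschitz [Nontrivial (Euc N)] (hk : KCond N k) {φ : Euc N → ℝ}
    (hl : LipschitzWith 1 φ) (hb : ∀ x, |φ x| ≤ 1) (R : ℝ)
    (hsupp : ∀ x, φ x ≠ 0 → ‖x‖ < R) : EE k φ < ⊤ := by
  have hktm : Measurable (kt k) := measurable_kt hk.2.1
  set χ : Euc N → ℝ≥0∞ := (ball (0 : Euc N) R).indicator (fun _ => 1) with hχ
  set m : Euc N × Euc N → ℝ≥0∞ :=
    fun p => ENNReal.ofReal (min 1 (dist p.1 p.2 ^ 2) * kt k (dist p.1 p.2)) with hm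
  have hχm : Measurable χ := measurable_const.indicator measurableSet_ball
  have hmm : Measurable m :=
    ((measurable_const.min (measurable_dist.pow_const 2)).mul
      (hktm.comp measurable_dist)).ennreal_ofReal
  set I : ℝ≥0∞ := ∫⁻ z : Euc N, ENNReal.ofReal (min 1 (‖z‖ ^ 2) * kt k ‖z‖) with hI
  have hgm : Measurable (fun z : Euc N => ENNReal.ofReal (min 1 (‖z‖ ^ 2) * kt k ‖z‖)) :=
    ((measurable_const.min (measurable_norm.pow_const 2)).mul
      (hktm.comp measurable_norm)).ennreal_ofReal
  have hIlt : I < ⊤ := kint_lt_top hk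
  -- pointwise bound
  have hpt : ∀ p : Euc N × Euc N,
      ENNReal.ofReal ((φ p.1 - φ p.2) ^ 2 * kt k (dist p.1 p.2)) ≤
        χ p.1 * (4 * m p) + χ p.2 * (4 * m p) := by
    intro p
    by_cases h1 : ‖p.1‖ < R ∨ ‖p.2‖ < R
    · have hcore : ENNReal.ofReal ((φ p.1 - φ p.2) ^ 2 * kt k (dist p.1 p.2)) ≤ 4 * m p := by
        rw [hm]
        have h4 : (4 : ℝ≥0∞) = ENNReal.ofReal (4:ℝ) := by norm_num
        rw [h4, ← ENNReal.ofReal_mul (by norm_num)]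
        apply ENNReal.ofReal_le_ofReal
        have hkt : 0 ≤ kt k (dist p.1 p.2) := kt_nonneg hk.1 _
        have hd : |φ p.1 - φ p.2| ≤ dist p.1 p.2 := by
          have := hl.dist_le_mul p.1 p.2
          rwa [Real.dist_eq, NNReal.coe_one, one_mul] at this
        have hd2 : |φ p.1 - φ p.2| ≤ 2 := by
          calc |φ p.1 - φ p.2| ≤ |φ p.1| + |φ p.2| := abs_sub _ _
            _ ≤ 2 := by linarith [hb p.1, hb p.2]
        have habs := abs_nonneg (φ p.1 - φ p.2)
        have hsq : (φ p.1 - φ p.2) ^ 2 ≤ 4 * min 1 (dist p.1 p.2 ^ 2) := by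
          rcases le_total (1 : ℝ) (dist p.1 p.2 ^ 2) with hc | hc
          · rw [min_eq_left hc]
            nlinarith [sq_abs (φ p.1 - φ p.2)]
          · rw [min_eq_right hc]
            nlinarith [sq_abs (φ p.1 - φ p.2), dist_nonneg (x := p.1) (y := p.2)]
        nlinarith [mul_nonneg (mul_nonneg (by norm_num : (0:ℝ) ≤ 4)
          (le_min zero_le_one (sq_nonneg (dist p.1 p.2)) : (0:ℝ) ≤ min 1 (dist p.1 p.2 ^2))) hkt]
      rcases h1 with h1 | h1
      · have : χ p.1 = 1 := by rw [hχ]; simp [Set.indicator_of_mem, mem_ball_zero_iff.2 h1]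
        calc ENNReal.ofReal ((φ p.1 - φ p.2) ^ 2 * kt k (dist p.1 p.2)) ≤ 4 * m p := hcore
          _ = χ p.1 * (4 * m p) := by rw [this, one_mul]
          _ ≤ _ := le_self_add
      · have : χ p.2 = 1 := by rw [hχ]; simp [Set.indicator_of_mem, mem_ball_zero_iff.2 h1]
        calc ENNReal.ofReal ((φ p.1 - φ p.2) ^ 2 * kt k (dist p.1 p.2)) ≤ 4 * m p := hcore
          _ = χ p.2 * (4 * m p) := by rw [this, one_mul]
          _ ≤ _ := le_add_self
    · push_neg at h1
      have e1 : φ p.1 = 0 := by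
        by_contra hne; exact absurd (hsupp _ hne) (not_lt.2 h1.1)
      have e2 : φ p.2 = 0 := by
        by_contra hne; exact absurd (hsupp _ hne) (not_lt.2 h1.2)
      simp [e1, e2]
  -- main estimate
  have hprod1 : Measurable (fun p : Euc N × Euc N => χ p.1 * (4 * m p)) := by
    exact (hχm.comp measurable_fst).mul (measurable_const.mul hmm)
  have hT1 : ∫⁻ p : Euc N × Euc N, χ p.1 * (4 * m p) ∂((volume : Measure (Euc N)).prod volume)
      = volume (ball (0 : Euc N) R) * (4 * I) := by
    rw [lintegral_prod (fun p : Euc N × Euc N => χ p.1 * (4 * m p)) hprod1.aemeasurable]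
    calc ∫⁻ x, ∫⁻ y, χ x * (4 * m (x, y)) ∂(volume : Measure (Euc N)) ∂(volume : Measure (Euc N))
        = ∫⁻ x, χ x * (4 * I) ∂(volume : Measure (Euc N)) := by
          refine lintegral_congr fun x => ?_
          have hmx : Measurable (fun y => m (x, y)) := by
            exact hmm.comp measurable_prodMk_left
          rw [lintegral_const_mul (χ x)
              (show Measurable fun y : Euc N => 4 * m (x, y) from measurable_const.mul hmx),
            lintegral_const_mul 4 hmx]
          congr 2
          exact lintegral_shift_norm hgm x
      _ = volume (ball (0 : Euc N) R) * (4 * I) := by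
          have : (fun x : Euc N => χ x * (4 * I)) =
              (ball (0 : Euc N) R).indicator (fun _ => 4 * I) := by
            funext x
            rw [hχ]
            by_cases hx : x ∈ ball (0 : Euc N) R
            · simp [Set.indicator_of_mem hx]
            · simp [Set.indicator_of_notMem hx]
          rw [this, lintegral_indicator measurableSet_ball, setLIntegral_const, mul_comm]
  have hT2 : ∫⁻ p : Euc N × Euc N, χ p.2 * (4 * m p) ∂((volume : Measure (Euc N)).prod volume)
      = ∫⁻ p : Euc N × Euc N, χ p.1 * (4 * m p) ∂((volume : Measure (Euc N)).prod volume) := by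
    set sw : (Euc N × Euc N) ≃ᵐ (Euc N × Euc N) :=
      (MeasurableEquiv.prodComm : (Euc N × Euc N) ≃ᵐ (Euc N × Euc N)) with hsw
    have hswap : ∀ p : Euc N × Euc N, χ p.2 * (4 * m p) =
        (fun q : Euc N × Euc N => χ q.1 * (4 * m q)) (sw p) := by
      intro p
      have hswp : sw p = (p.2, p.1) := rfl
      rw [hswp]
      have : m (p.2, p.1) = m p := by
        rw [hm]; simp only; rw [dist_comm]
      simp only [this]
    calc ∫⁻ p, χ p.2 * (4 * m p) ∂((volume : Measure (Euc N)).prod volume)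
        = ∫⁻ p, (fun q : Euc N × Euc N => χ q.1 * (4 * m q)) (sw p)
            ∂((volume : Measure (Euc N)).prod volume) := lintegral_congr hswap
      _ = ∫⁻ q, χ q.1 * (4 * m q)
            ∂(Measure.map sw ((volume : Measure (Euc N)).prod volume)) := by
          rw [lintegral_map_equiv (fun q : Euc N × Euc N => χ q.1 * (4 * m q)) sw]
      _ = ∫⁻ q, χ q.1 * (4 * m q) ∂((volume : Measure (Euc N)).prod volume) := by
          congr 1
          exact Measure.prod_swap
  calc EE k φ ≤ ∫⁻ p : Euc N × Euc N, (χ p.1 * (4 * m p) + χ p.2 * (4 * m p))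
        ∂((volume : Measure (Euc N)).prod volume) := lintegral_mono hpt
    _ = ∫⁻ p : Euc N × Euc N, χ p.1 * (4 * m p) ∂((volume : Measure (Euc N)).prod volume) +
        ∫⁻ p : Euc N × Euc N, χ p.2 * (4 * m p) ∂((volume : Measure (Euc N)).prod volume) :=
        lintegral_add_left hprod1 _
    _ < ⊤ := by
        rw [hT1, hT2, hT1]
        have h4I : (4:ℝ≥0∞) * I < ⊤ := ENNReal.mul_lt_top (by norm_num) hIlt
        have hball : volume (ball (0 : Euc N) R) < ⊤ := measure_ball_lt_top
        exact ENNReal.add_lt_top.2 ⟨ENNReal.mul_lt_top hball h4I, ENNReal.mul_lt_top hball h4I⟩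

end BumpAux
section MeasAux
variable {N : ℕ} {k : ℝ → ℝ}

/-- bump function for an open set -/
def bump (S : Set (Euc N)) (x : Euc N) : ℝ := min (infDist x Sᶜ) 1

lemma bump_lipschitz (S : Set (Euc N)) : LipschitzWith 1 (bump S) :=
  LipschitzWith.min_const (lipschitz_infDist_pt Sᶜ) 1

lemma bump_nonneg (S : Set (Euc N)) (x : Euc N) : 0 ≤ bump S x :=
  le_min infDist_nonneg zero_le_one

lemma bump_abs_le (S : Set (Euc N)) (x : Euc N) : |bump S x| ≤ 1 := by
  rw [abs_of_nonneg (bump_nonneg S x)]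
  exact min_le_right _ _

lemma bump_eq_zero {S : Set (Euc N)} {x : Euc N} (hx : x ∉ S) : bump S x = 0 := by
  rw [bump, infDist_zero_of_mem (by simpa using hx)]
  simp

lemma bump_pos {S : Set (Euc N)} (hS : IsOpen S) {x : Euc N} (hx : x ∈ S)
    (hne : Sᶜ.Nonempty) : 0 < bump S x := by
  refine lt_min ?_ one_pos
  rw [← (isClosed_compl_iff.2 hS).notMem_iff_infDist_pos hne]
  simpa using hx

lemma aesm_Fsol {Ω : Set (Euc N)} (hk : KCond N k) (hΩo : IsOpen Ω)
    {f : ℝ → ℝ → ℝ} {u : Euc N → ℝ} (hu : IsWeakSol k Ω f u)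
    {e : Euc N} (he : ‖e‖ = 1) :
    AEStronglyMeasurable (fun x => f ‖x‖ (u x)) (volume.restrict Ω) := by
  have hnt : Nontrivial (Euc N) := by
    refine nontrivial_of_ne e 0 fun h => ?_
    rw [h, norm_zero] at he; norm_num at he
  have hmain : ∀ n : ℕ, AEStronglyMeasurable (fun x => f ‖x‖ (u x))
      (volume.restrict (Ω ∩ ball (0 : Euc N) (n + 1))) := by
    intro n
    set S : Set (Euc N) := Ω ∩ ball (0 : Euc N) (n + 1) with hS
    have hSo : IsOpen S := hΩo.inter isOpen_ball
    have hne : Sᶜ.Nonempty := by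
      refine ⟨((n : ℝ) + 1) • e, fun hmem => ?_⟩
      have := mem_ball_zero_iff.1 hmem.2
      rw [norm_smul, he, mul_one, Real.norm_eq_abs,
        abs_of_nonneg (by positivity : (0:ℝ) ≤ (n : ℝ) + 1)] at this
      exact lt_irrefl _ this
    set φ : Euc N → ℝ := bump S with hφ
    have hlip : LipschitzWith 1 φ := bump_lipschitz S
    have hcont : Continuous φ := hlip.continuous
    have hsupp : ∀ x, φ x ≠ 0 → ‖x‖ < (n : ℝ) + 1 := by
      intro x hx
      by_contra hlt
      rcases Classical.em (x ∈ S) with hmem | hmem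
      · exact hlt (mem_ball_zero_iff.1 hmem.2)
      · exact hx (bump_eq_zero hmem)
    have hcs : HasCompactSupport φ := by
      refine IsCompact.of_isClosed_subset (isCompact_closedBall (0 : Euc N) ((n : ℝ) + 1))
        (isClosed_tsupport _) (closure_minimal ?_ Metric.isClosed_closedBall)
      intro x hx
      rw [mem_closedBall_zero_iff]
      exact (hsupp x hx).le
    have hmem : memDJ k Ω φ := by
      refine ⟨hcont.memLp_of_hasCompactSupport hcs, ?_, ?_⟩
      · rw [jEnergy_eq_EE hk.2.1 hcont.measurable.aemeasurable]
        exact ENNReal.mul_lt_top (by norm_num)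
          (EE_lt_top_of_lipschitz hk hlip (bump_abs_le S) _ hsupp)
      · refine Filter.Eventually.of_forall fun x hx => ?_
        exact bump_eq_zero (fun hmem => hx hmem.1)
    have hInt := (hu.2 φ hmem hcs).1
    have h1 : AEStronglyMeasurable (fun x => (f ‖x‖ (u x) * φ x) * (φ x)⁻¹)
        (volume.restrict S) :=
      (hInt.aestronglyMeasurable.mono_measure
        (Measure.restrict_mono inter_subset_left le_rfl)).mul
        (hcont.measurable.inv.aestronglyMeasurable)
    refine h1.congr ?_
    filter_upwards [self_mem_ae_restrict hSo.measurableSet] with x hx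
    have hφx : φ x ≠ 0 := (bump_pos hSo hx hne).ne'
    field_simp
  have hUnion : Ω = ⋃ n : ℕ, Ω ∩ ball (0 : Euc N) (n + 1) := by
    ext x
    constructor
    · intro hx
      obtain ⟨n, hn⟩ := exists_nat_gt ‖x‖
      exact Set.mem_iUnion.2 ⟨n, hx, mem_ball_zero_iff.2 (by linarith)⟩
    · intro hx
      obtain ⟨n, hn⟩ := Set.mem_iUnion.1 hx
      exact hn.1
  rw [hUnion]
  exact aestronglyMeasurable_iUnion_iff.2 hmain

lemma measurePreserving_reflSp_restrict {e : Euc N} (he : ‖e‖ = 1) {Ω : Set (Euc N)}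
    (hΩ : reflSp e 0 ⁻¹' Ω = Ω) (hmeas : MeasurableSet Ω) :
    MeasurePreserving (reflSp e 0) (volume.restrict Ω) (volume.restrict Ω) := by
  refine ⟨(measurePreserving_reflSp he).measurable, ?_⟩
  have h := Measure.restrict_map (μ := (volume : Measure (Euc N)))
    (measurePreserving_reflSp he).measurable hmeas
  rw [map_reflSp he, hΩ] at h
  exact h.symm

end MeasAux
theorem reflection_difference_is_antisym_supersol (N : ℕ) (k : ℝ → ℝ) (hk : KCond N k)
    (Ω : Set (Euc N)) (hΩo : IsOpen Ω) (hΩr : IsRadialSet Ω)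
    (f : ℝ → ℝ → ℝ) (hf1 : CondF1 f)
    (u : Euc N → ℝ) (hu : IsWeakSol k Ω f u) (hbdd : IsBoundedFun u)
    (hU2 : Tendsto u (cocompact (Euc N)) (nhds 0))
    (e : Euc N) (he : ‖e‖ = 1)
    (v : Euc N → ℝ) (hv : v = fun x => u (reflSp e 0 x) - u x)
    (c : Euc N → ℝ)
    (hc : c = fun x => if v x = 0 then 0
      else (f ‖x‖ (u (reflSp e 0 x)) - f ‖x‖ (u x)) / v x) :
    MemLp c ⊤ (volume.restrict (Ω ∩ halfSp e 0)) ∧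
    AntiSuperSol k e 0 (Ω ∩ halfSp e 0) c v := by
  -- abbreviations and common facts
  have hQΩ : reflSp e 0 ⁻¹' Ω = Ω := by
    ext x
    exact hΩr (reflSp e 0 x) x (norm_reflSp he x)
  have hmΩ : MeasurableSet Ω := hΩo.measurableSet
  have hHo : IsOpen (halfSp e 0 : Set (Euc N)) := by
    have hcont : Continuous fun x : Euc N => ⟪x, e⟫ :=
      continuous_id.inner continuous_const
    exact isOpen_Ioi.preimage hcont
  have hmU : MeasurableSet (Ω ∩ halfSp e 0) := (hΩo.inter hHo).measurableSet
  have hum : AEMeasurable u (volume : Measure (Euc N)) :=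
    hu.1.1.aestronglyMeasurable.aemeasurable
  have huQm : AEMeasurable (fun x => u (reflSp e 0 x)) (volume : Measure (Euc N)) :=
    hum.comp_quasiMeasurePreserving (measurePreserving_reflSp he).quasiMeasurePreserving
  have hvm : AEMeasurable v (volume : Measure (Euc N)) := by
    rw [hv]; exact huQm.sub hum
  have hEEu : EE k u < ⊤ := EE_lt_top hk.2.1 hum hu.1.2.1
  have hEEuQ : EE k (fun x => u (reflSp e 0 x)) < ⊤ := by
    rw [EE_comp_refl he u]; exact hEEu
  have hu0 : ∀ᵐ x : Euc N, x ∉ Ω → u x = 0 := hu.1.2.2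
  have hu0Q : ∀ᵐ x : Euc N, x ∉ Ω → u (reflSp e 0 x) = 0 := by
    have h := (ae_reflSp_iff he (P := fun x => x ∉ Ω → u x = 0)).2 hu0
    filter_upwards [h] with x hx hxΩ
    refine hx (fun hmem => hxΩ ?_)
    rwa [← hQΩ]
  have hF : AEStronglyMeasurable (fun x => f ‖x‖ (u x)) (volume.restrict Ω) :=
    aesm_Fsol hk hΩo hu he
  -- the L^∞ bound on c
  obtain ⟨M, hM⟩ := hbdd
  have hM0 : 0 ≤ M := le_trans (abs_nonneg _) (hM 0)
  obtain ⟨L, hL, hLip⟩ := hf1 (M + 1) (by linarith)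
  have hbdc : ∀ x, |c x| ≤ L := by
    intro x
    rw [hc]
    simp only
    by_cases hvx : v x = 0
    · rw [if_pos hvx, abs_zero]; exact hL.le
    · rw [if_neg hvx, abs_div]
      have hvxx : v x = u (reflSp e 0 x) - u x := by rw [hv]
      have hmem1 : u (reflSp e 0 x) ∈ Set.Icc (-(M+1)) (M+1) := by
        have := hM (reflSp e 0 x)
        rw [abs_le] at this
        constructor <;> linarith [this.1, this.2]
      have hmem2 : u x ∈ Set.Icc (-(M+1)) (M+1) := by
        have := hM x
        rw [abs_le] at this
        constructor <;> linarith [this.1, this.2]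
      have hdiff := hLip ‖x‖ (norm_nonneg x) _ hmem1 _ hmem2
      rw [div_le_iff₀ (abs_pos.2 hvx)]
      calc |f ‖x‖ (u (reflSp e 0 x)) - f ‖x‖ (u x)| ≤ L * |u (reflSp e 0 x) - u x| := hdiff
        _ = L * |v x| := by rw [hvxx]
  -- measurability of c
  have hmemc : MemLp c ⊤ (volume.restrict (Ω ∩ halfSp e 0)) := by
    have hFU : AEStronglyMeasurable (fun x => f ‖x‖ (u x))
        (volume.restrict (Ω ∩ halfSp e 0)) :=
      hF.mono_measure (Measure.restrict_mono inter_subset_left le_rfl)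
    have hFQ : AEStronglyMeasurable (fun x => f ‖x‖ (u (reflSp e 0 x)))
        (volume.restrict Ω) := by
      have h := hF.comp_measurePreserving (measurePreserving_reflSp_restrict he hQΩ hmΩ)
      have heq : (fun x => f ‖x‖ (u (reflSp e 0 x))) =
          ((fun x => f ‖x‖ (u x)) ∘ reflSp e 0) := by
        funext x
        simp only [Function.comp_apply]
        rw [norm_reflSp he]
      rw [heq]
      exact h
    have hFQU : AEStronglyMeasurable (fun x => f ‖x‖ (u (reflSp e 0 x)))
        (volume.restrict (Ω ∩ halfSp e 0)) :=
      hFQ.mono_measure (Measure.restrict_mono inter_subset_left le_rfl)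
    have hvU : AEStronglyMeasurable v (volume.restrict (Ω ∩ halfSp e 0)) :=
      hvm.aestronglyMeasurable.restrict
    have hg : AEStronglyMeasurable
        (fun x => f ‖x‖ (u (reflSp e 0 x)) - f ‖x‖ (u x))
        (volume.restrict (Ω ∩ halfSp e 0)) := hFQU.sub hFU
    obtain ⟨G, hGm, hGe⟩ := hg
    obtain ⟨V, hVm, hVe⟩ := hvU
    have hc'm : Measurable (fun x => if V x = 0 then 0 else G x / V x) := by
      refine Measurable.ite ?_ measurable_const (hGm.measurable.div hVm.measurable)
      exact hVm.measurable (measurableSet_singleton 0)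
    have hceq : c =ᵐ[volume.restrict (Ω ∩ halfSp e 0)]
        (fun x => if V x = 0 then 0 else G x / V x) := by
      filter_upwards [hGe, hVe] with x h1 h2
      rw [hc]
      simp only
      rw [h2, ← h1]
    have hAESM : AEStronglyMeasurable c (volume.restrict (Ω ∩ halfSp e 0)) :=
      ⟨_, hc'm.stronglyMeasurable, hceq⟩
    refine memLp_top_of_bound hAESM L (Filter.Eventually.of_forall fun x => ?_)
    rw [Real.norm_eq_abs]
    exact hbdc x
  refine ⟨hmemc, ?_, ?_, ?_, ?_, ?_⟩
  · -- antisymmetry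
    intro x
    rw [hv]
    simp only
    rw [reflSp_invol he]
    ring
  · -- U' = univ
    refine ⟨Set.univ, isOpen_univ, ?_, Set.subset_univ _, ?_, ?_⟩
    · rw [Set.image_univ]
      exact Set.range_eq_univ.mpr (surjective_reflSp he)
    · refine ⟨v, fun _ => 0, by funext x; simp, ?_, ?_⟩
      · have h2 : MemLp (u ∘ reflSp e 0 - u) 2 (volume : Measure (Euc N)) :=
          (hu.1.1.comp_measurePreserving (measurePreserving_reflSp he)).sub hu.1.1
        have : v = u ∘ reflSp e 0 - u := by
          funext x; rw [hv]; rfl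
        rw [this]
        exact h2
      · exact MemLp.zero
    · -- rhoE < ⊤
      have h1 : rhoE k Set.univ v = EE k v := by
        unfold rhoE EE
        simp only [Measure.restrict_univ]
        calc ∫⁻ x, ∫⁻ y, ENNReal.ofReal ((v x - v y) ^ 2 * k (dist x y))
            = ∫⁻ x, ∫⁻ y, ENNReal.ofReal ((v x - v y) ^ 2 * kt k (dist x y)) := by
              refine lintegral_congr fun x => lintegral_congr fun y => ?_
              rw [mul_k_eq_mul_kt k (fun h => by rw [h]; ring)]
          _ = _ := lintegral_lintegral ((aemeasurable_sq_pair hk.2.1 hvm).ennreal_ofReal)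
      rw [h1]
      have h2 : EE k v ≤ 2 * EE k (fun x => u (reflSp e 0 x)) + 2 * EE k u := by
        rw [hv]
        exact EE_sub_le hk.2.1 hk.1 huQm hum
      refine lt_of_le_of_lt h2 ?_
      exact ENNReal.add_lt_top.2 ⟨ENNReal.mul_lt_top (by norm_num) hEEuQ,
        ENNReal.mul_lt_top (by norm_num) hEEu⟩
  · -- nonnegativity on H \ U
    filter_upwards [hu0, hu0Q] with x h1 h2 hx
    have hxΩ : x ∉ Ω := fun hΩx => hx.2 ⟨hΩx, hx.1⟩
    rw [hv]
    simp only
    rw [h1 hxΩ, h2 hxΩ]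
    norm_num
  · -- asymptotic nonnegativity
    intro ε hε
    have h : ∀ᶠ x in cocompact (Euc N), |u x| < ε / 2 := by
      have := Metric.tendsto_nhds.mp hU2 (ε / 2) (by positivity)
      filter_upwards [this] with x hx
      rwa [Real.dist_eq, sub_zero] at hx
    obtain ⟨K, hK, hKall⟩ := (hasBasis_cocompact.eventually_iff).mp h
    obtain ⟨R, hR⟩ := hK.isBounded.subset_closedBall 0
    refine ⟨R + 1, fun x _ hx => ?_⟩
    have hx1 : x ∉ K := by
      intro hmem
      have := mem_closedBall_zero_iff.1 (hR hmem)
      linarith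
    have hx2 : reflSp e 0 x ∉ K := by
      intro hmem
      have := mem_closedBall_zero_iff.1 (hR hmem)
      rw [norm_reflSp he] at this
      linarith
    have h1 := hKall hx1
    have h2 := hKall hx2
    rw [abs_lt] at h1 h2
    rw [hv]
    simp only
    linarith [h1.1, h1.2, h2.1, h2.2]
  · -- the supersolution inequality
    intro φ hφ hφc hφ0
    have hUsub : Ω ∩ halfSp e 0 ⊆ Ω := inter_subset_left
    have hφmeas : AEMeasurable φ (volume : Measure (Euc N)) :=
      hφ.1.aestronglyMeasurable.aemeasurable
    have hφΩ : memDJ k Ω φ := by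
      refine ⟨hφ.1, hφ.2.1, ?_⟩
      filter_upwards [hφ.2.2] with x hx hxΩ
      exact hx (fun hU => hxΩ hU.1)
    have hEEφ : EE k φ < ⊤ := EE_lt_top hk.2.1 hφmeas hφ.2.1
    set ψ : Euc N → ℝ := fun x => φ (reflSp e 0 x) with hψ
    have hψc : HasCompactSupport ψ := by
      have h1 : reflSp e 0 ⁻¹' (tsupport φ) = reflSp e 0 '' (tsupport φ) := by
        ext x
        constructor
        · intro hx
          exact ⟨reflSp e 0 x, hx, reflSp_invol he x⟩
        · rintro ⟨y, hy, rfl⟩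
          rw [Set.mem_preimage, reflSp_invol he]
          exact hy
      have h2 : IsCompact (reflSp e 0 ⁻¹' (tsupport φ)) := by
        rw [h1]; exact hφc.image (continuous_reflSp he)
      refine IsCompact.of_isClosed_subset h2 (isClosed_tsupport _) ?_
      refine closure_minimal ?_ ((isClosed_tsupport φ).preimage (continuous_reflSp he))
      intro x hx
      exact subset_tsupport φ hx
    have hψΩ : memDJ k Ω ψ := by
      refine ⟨?_, ?_, ?_⟩
      · exact hφ.1.comp_measurePreserving (measurePreserving_reflSp he)
      · have hψm : AEMeasurable ψ (volume : Measure (Euc N)) :=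
          hφmeas.comp_quasiMeasurePreserving
            (measurePreserving_reflSp he).quasiMeasurePreserving
        rw [jEnergy_eq_EE hk.2.1 hψm, hψ, EE_comp_refl he φ]
        exact ENNReal.mul_lt_top (by norm_num) hEEφ
      · have h := (ae_reflSp_iff he (P := fun x => x ∉ Ω → φ x = 0)).2 hφΩ.2.2
        filter_upwards [h] with x hx hxΩ
        refine hx (fun hmem => hxΩ ?_)
        rwa [← hQΩ]
    have H1 := hu.2 φ hφΩ hφc
    have H2 := hu.2 ψ hψΩ hψc
    have hmp := measurePreserving_reflSp_restrict he hQΩ hmΩ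
    have hmapr : Measure.map (reflME e he) (volume.restrict Ω) = volume.restrict Ω :=
      hmp.map_eq
    -- chain of equalities
    have hchain : jForm k v φ = ∫ x in Ω ∩ halfSp e 0, c x * v x * φ x := by
      have stepA : jForm k v φ =
          jForm k (fun x => u (reflSp e 0 x)) φ - jForm k u φ := by
        rw [hv]
        exact jForm_sub hk.2.1 hk.1 huQm hum hφmeas hEEuQ hEEu hEEφ
      have stepB : jForm k (fun x => u (reflSp e 0 x)) φ = jForm k u ψ :=
        jForm_comp_refl he k u φ
      have stepD : ∫ x in Ω, f ‖x‖ (u x) * ψ x =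
          ∫ x in Ω, f ‖x‖ (u (reflSp e 0 x)) * φ x := by
        calc ∫ x in Ω, f ‖x‖ (u x) * ψ x
            = ∫ x, (fun y => f ‖y‖ (u y) * ψ y) x
                ∂(Measure.map (reflME e he) (volume.restrict Ω)) := by rw [hmapr]
          _ = ∫ x, f ‖reflSp e 0 x‖ (u (reflSp e 0 x)) * ψ (reflSp e 0 x)
                ∂(volume.restrict Ω) := MeasureTheory.integral_map_equiv _ _
          _ = ∫ x in Ω, f ‖x‖ (u (reflSp e 0 x)) * φ x := by
              refine integral_congr_ae (Filter.Eventually.of_forall fun x => ?_)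
              show f ‖reflSp e 0 x‖ (u (reflSp e 0 x)) * ψ (reflSp e 0 x)
                  = f ‖x‖ (u (reflSp e 0 x)) * φ x
              rw [norm_reflSp he]
              simp only [hψ]
              rw [reflSp_invol he]
      have hIntQ : Integrable (fun x => f ‖x‖ (u (reflSp e 0 x)) * φ x)
          (volume.restrict Ω) := by
        have h0 : Integrable (fun x => f ‖x‖ (u x) * ψ x) (volume.restrict Ω) := H2.1
        rw [← hmapr] at h0
        have h1 := (MeasureTheory.integrable_map_equiv (reflME e he)
          (fun x => f ‖x‖ (u x) * ψ x)).1 h0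
        refine h1.congr (Filter.Eventually.of_forall fun x => ?_)
        show f ‖reflSp e 0 x‖ (u (reflSp e 0 x)) * ψ (reflSp e 0 x)
            = f ‖x‖ (u (reflSp e 0 x)) * φ x
        rw [norm_reflSp he]
        simp only [hψ]
        rw [reflSp_invol he]
      have stepF : (∫ x in Ω, f ‖x‖ (u (reflSp e 0 x)) * φ x) -
            (∫ x in Ω, f ‖x‖ (u x) * φ x) =
          ∫ x in Ω, (c x * v x) * φ x := by
        rw [← integral_sub hIntQ H1.1]
        refine integral_congr_ae (Filter.Eventually.of_forall fun x => ?_)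
        show f ‖x‖ (u (reflSp e 0 x)) * φ x - f ‖x‖ (u x) * φ x = c x * v x * φ x
        have hvx : v x = u (reflSp e 0 x) - u x := by rw [hv]
        have hcv : c x * v x = f ‖x‖ (u (reflSp e 0 x)) - f ‖x‖ (u x) := by
          rw [hc]
          simp only
          by_cases h : v x = 0
          · rw [if_pos h, zero_mul]
            have : u (reflSp e 0 x) = u x := by
              have := h
              rw [hvx] at this
              linarith [sub_eq_zero.1 this]
            rw [this, sub_self]
          · rw [if_neg h, div_mul_cancel₀ _ h]
        rw [hcv]
        ring
      have stepH : ∫ x in Ω, (c x * v x) * φ x =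
          ∫ x in Ω ∩ halfSp e 0, c x * v x * φ x := by
        have hdecomp : (Ω ∩ halfSp e 0) ∪ (Ω \ (Ω ∩ halfSp e 0)) = Ω :=
          Set.union_diff_cancel hUsub
        conv_lhs => rw [← hdecomp]
        apply integral_union_eq_left_of_ae
        have hφz := hφ.2.2
        filter_upwards [ae_restrict_of_ae hφz,
          self_mem_ae_restrict (hmΩ.diff hmU)] with x h1 h2
        rw [h1 h2.2, mul_zero]
      rw [stepA, stepB, H2.2, H1.2, stepD, stepF, stepH]
    rw [hchain]
end
end
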